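/- arXiv:2501.00275 — 4 statements merged into one kernel-verified Lean document; each statement's English description precedes it below -/
import Mathlib

section
/- Let X=(x_1,…,x_n) and X̄=(1/x_1,…,1/x_n). For any partition λ with at most n parts, 𝔬_λ(−X,−X̄,−1) = (−1)^{|λ|} so_λ(X); and for any partition λ with at most n+1 parts, 𝔰𝔬⁻_λ(−X,−X̄,−1) = oe_λ(−X,−1), where oe_λ(−X,−1) is the even orthogonal character in the n+1 variables (−x_1,…,−x_n,−1). -/
open scoped BigOperators

noncomputable section

variable {K : Type} [Field K]

/-- Complete homogeneous symmetric polynomial of degree `m` in the list of variables `X`. -/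
def hh : ℕ → List K → K
  | 0, _ => 1
  | _ + 1, [] => 0
  | m + 1, x :: xs => x * hh m (x :: xs) + hh (m + 1) xs
  termination_by m X => (m, X.length)

/-- `h` indexed by an integer: zero for a negative index. -/
def hz (m : ℤ) (X : List K) : K := if 0 ≤ m then hh m.toNat X else 0

def invList (X : List K) : List K := X.map (·⁻¹)
def negList (X : List K) : List K := X.map (fun x => -x)
def powList (X : List K) (e : ℕ) : List K := X.map (· ^ e)

/-- the variables `(X, ωX, ω²X, …, ω^{t-1}X)`. -/
def twistList (t : ℕ) (ω : K) (X : List K) : List K :=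
  (List.range t).flatMap fun k => X.map (fun x => ω ^ k * x)

/-- Schur polynomial (Jacobi–Trudi, `N × N` determinant). -/
def schur (lam : ℕ → ℕ) (N : ℕ) (X : List K) : K :=
  Matrix.det (Matrix.of fun i j : Fin N => hz ((lam i : ℤ) - i + j) X)

/-- Skew Schur polynomial. -/
def skewSchur (lam mu : ℕ → ℕ) (N : ℕ) (X : List K) : K :=
  Matrix.det (Matrix.of fun i j : Fin N => hz ((lam i : ℤ) - (mu j : ℤ) - i + j) X)

/-- Symplectic character `sp_λ(X)`. -/
def spChar (lam : ℕ → ℕ) (N : ℕ) (X : List K) : K :=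
  (2 : K)⁻¹ * Matrix.det (Matrix.of fun i j : Fin N =>
    hz ((lam i : ℤ) - i + j) (X ++ invList X) + hz ((lam i : ℤ) - i - j) (X ++ invList X))

/-- Odd orthogonal character `so_λ(X)`. -/
def soChar (lam : ℕ → ℕ) (N : ℕ) (X : List K) : K :=
  Matrix.det (Matrix.of fun i j : Fin N =>
    hz ((lam i : ℤ) - i + j) (X ++ invList X ++ [1]) -
      hz ((lam i : ℤ) - i - j - 2) (X ++ invList X ++ [1]))

/-- Even orthogonal character `oe_λ(X)`. -/
def oeChar (lam : ℕ → ℕ) (N : ℕ) (X : List K) : K :=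
  Matrix.det (Matrix.of fun i j : Fin N =>
    hz ((lam i : ℤ) - i + j) (X ++ invList X) -
      hz ((lam i : ℤ) - i - j - 2) (X ++ invList X))

/-- Universal even orthogonal character `𝔬_λ(Z)`. -/
def uo (lam : ℕ → ℕ) (N : ℕ) (Z : List K) : K :=
  Matrix.det (Matrix.of fun i j : Fin N =>
    hz ((lam i : ℤ) - i + j) Z - hz ((lam i : ℤ) - i - j - 2) Z)

/-- Universal symplectic character `𝔰𝔭_λ(Z)`. -/
def usp (lam : ℕ → ℕ) (N : ℕ) (Z : List K) : K :=
  (2 : K)⁻¹ * Matrix.det (Matrix.of fun i j : Fin N =>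
    hz ((lam i : ℤ) - i + j) Z + hz ((lam i : ℤ) - i - j) Z)

/-- Universal odd orthogonal character `𝔰𝔬_λ(Z)`. -/
def uso (lam : ℕ → ℕ) (N : ℕ) (Z : List K) : K :=
  Matrix.det (Matrix.of fun i j : Fin N =>
    hz ((lam i : ℤ) - i + j) Z + hz ((lam i : ℤ) - i - j - 1) Z)

/-- The variant `𝔰𝔬⁻_λ(Z)`. -/
def usoNeg (lam : ℕ → ℕ) (N : ℕ) (Z : List K) : K :=
  Matrix.det (Matrix.of fun i j : Fin N =>
    hz ((lam i : ℤ) - i + j) Z - hz ((lam i : ℤ) - i - j - 1) Z)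

/-- beta-set `β(λ,m) = (λ_1+m-1, …, λ_m)`, as a (decreasing) list. -/
def betaList (lam : ℕ → ℕ) (m : ℕ) : List ℕ :=
  (List.range m).map fun i => lam i + (m - 1 - i)

/-- the number `n_i(λ,m)` of elements of `β(λ,m)` congruent to `i` mod `s`. -/
def nres (lam : ℕ → ℕ) (m s i : ℕ) : ℕ :=
  ((betaList lam m).filter fun b => b % s = i).length

def sortDesc (L : List ℕ) : List ℕ := List.insertionSort (· ≥ ·) L

/-- the `s`-core of `λ`, computed from `β(λ,m)`. -/
def coreP (lam : ℕ → ℕ) (m s : ℕ) : ℕ → ℕ := fun k =>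
  let L := sortDesc ((List.range s).flatMap fun i =>
    (List.range (nres lam m s i)).map fun j => s * j + i)
  if k < m then L.getD k 0 + k + 1 - m else 0

/-- the `i`-th member `λ^{(i)}` of the `s`-quotient of `λ`, computed from `β(λ,m)`. -/
def quotP (lam : ℕ → ℕ) (m s i : ℕ) : ℕ → ℕ := fun k =>
  let L := sortDesc (((betaList lam m).filter fun b => b % s = i).map fun b => b / s)
  if k < L.length then L.getD k 0 + k + 1 - L.length else 0

/-- conjugate partition (`N` a bound on the number of parts). -/
def conjB (f : ℕ → ℕ) (N k : ℕ) : ℕ := ((Finset.range N).filter fun j => k < f j).card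

/-- Frobenius rank. -/
def frank (f : ℕ → ℕ) (N : ℕ) : ℕ := ((Finset.range N).filter fun i => i + 1 ≤ f i).card

/-- number of nonzero parts (`N` a bound on the number of parts). -/
def plen (f : ℕ → ℕ) (N : ℕ) : ℕ := ((Finset.range N).filter fun i => 0 < f i).card

/-- sum of the parts (`N` a bound on the number of parts). -/
def psum (f : ℕ → ℕ) (N : ℕ) : ℕ := ∑ i ∈ Finset.range N, f i

def IsSelfConj (f : ℕ → ℕ) (N : ℕ) : Prop := ∀ k, f k = conjB f N k

/-- symplectic partition: `(α | α+1)` in Frobenius coordinates. -/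
def IsSymplecticP (f : ℕ → ℕ) (N : ℕ) : Prop := ∀ i < frank f N, conjB f N i = f i + 1

/-- orthogonal partition: `(α+1 | α)` in Frobenius coordinates. -/
def IsOrthogonalP (f : ℕ → ℕ) (N : ℕ) : Prop := ∀ i < frank f N, f i = conjB f N i + 1

/-- the partition `(λ, -μ)_N`. -/
def negConcat (f g : ℕ → ℕ) (N : ℕ) : ℕ → ℕ := fun k =>
  if k < N then g 0 + f k - g (N - 1 - k) else 0

/-- number of inversions: pairs `i < j` with `L_i < L_j`. -/
def invCount (L : List ℕ) : ℕ :=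
  (Finset.univ.filter fun p : Fin L.length × Fin L.length =>
    (p.1 : ℕ) < (p.2 : ℕ) ∧ L.get p.1 < L.get p.2).card

def sgnList (L : List ℕ) : ℤ := (-1) ^ invCount L

/-- rearrangement of `β(λ,m)`: residue classes mod `s` listed in the order given by `E`
followed by the remaining residues increasingly, decreasingly within each class. -/
def blockedList (E : List ℕ) (lam : ℕ → ℕ) (m s : ℕ) : List ℕ :=
  (E ++ (List.range s).filter fun a => a ∉ E).flatMap fun e =>
    sortDesc ((betaList lam m).filter fun b => b % s = e)

/-- sign of the permutation `σ_λ^E`. -/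
def sgnSigmaE (E : List ℕ) (lam : ℕ → ℕ) (m s : ℕ) : ℤ := sgnList (blockedList E lam m s)

/-- sign of the permutation `σ_λ`. -/
def sgnSigma (lam : ℕ → ℕ) (m s : ℕ) : ℤ := sgnSigmaE [] lam m s

/-- staircase partition `(k, k-1, …, 1)`. -/
def stair (k : ℕ) : ℕ → ℕ := fun i => k - i

/-- a field containing `n` generic variables. -/
abbrev FF (n : ℕ) : Type := FractionRing (MvPolynomial (Fin n) ℂ)

/-- the `n` generic variables of `FF n`. -/
def genX (n : ℕ) : List (FF n) :=
  List.ofFn fun i : Fin n => algebraMap (MvPolynomial (Fin n) ℂ) (FF n) (MvPolynomial.X i)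


noncomputable section AuxLemmas
variable {K : Type} [Field K]

lemma hh_zero (L : List K) : hh 0 L = 1 := by rw [hh]
lemma hh_nil (m : ℕ) : hh (m+1) ([] : List K) = 0 := by rw [hh]
lemma hh_cons (m : ℕ) (x : K) (L : List K) :
    hh (m+1) (x :: L) = x * hh m (x::L) + hh (m+1) L := by rw [hh]

lemma hz_negIdx {m : ℤ} (h : m < 0) (L : List K) : hz m L = 0 := by
  rw [hz, if_neg (not_le.2 h)]

lemma hz_natIdx (m : ℕ) (L : List K) : hz (m : ℤ) L = hh m L := by
  rw [hz, if_pos (Int.ofNat_nonneg m)]; norm_num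

lemma hz_cons_rec (m : ℤ) (c : K) (Z : List K) :
    hz m (c::Z) = c * hz (m-1) (c::Z) + hz m Z := by
  rcases lt_trichotomy m 0 with h | h | h
  · simp [hz, not_le.2 h, not_le.2 (by omega : m - 1 < 0)]; intro h'; omega
  · subst h; simp [hz, hh_zero]
  · have h1 : (0:ℤ) ≤ m := le_of_lt h
    have h2 : (0:ℤ) ≤ m - 1 := by omega
    have h3 : m.toNat = (m-1).toNat + 1 := by omega
    simp only [hz, if_pos h1, if_pos h2, h3, hh_cons]

lemma hh_cons_sum (x : K) (L : List K) (m : ℕ) :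
    hh m (x :: L) = ∑ k ∈ Finset.range (m+1), x ^ k * hz ((m:ℤ) - k) L := by
  induction m with
  | zero => simp [hh_zero, hz]
  | succ m ih =>
    have key : ∑ k ∈ Finset.range (m+1+1), x ^ k * hz ((↑(m+1):ℤ) - k) L
        = (∑ k ∈ Finset.range (m+1), x ^ (k+1) * hz ((m:ℤ) - k) L)
          + hz ((m:ℤ)+1) L := by
      rw [Finset.sum_range_succ']
      congr 1
      · apply Finset.sum_congr rfl; intro k _
        congr 2
        push_cast; ring
      · norm_num
    have hm1 : hz ((m:ℤ)+1) L = hh (m+1) L := by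
      have := hz_natIdx (m+1) L; push_cast at this; rw [← this]
    rw [hh_cons, ih, key, hm1, Finset.mul_sum]
    congr 1
    apply Finset.sum_congr rfl; intro k _; ring

lemma hz_cons_sum (x : K) (L : List K) (m : ℤ) (M : ℕ) (hM : m ≤ M) :
    hz m (x :: L) = ∑ k ∈ Finset.range (M+1), x ^ k * hz (m - k) L := by
  rcases le_or_gt 0 m with h | h
  · have hmt : (m.toNat : ℤ) = m := Int.toNat_of_nonneg h
    rw [hz, if_pos h, hh_cons_sum]
    rw [Finset.sum_subset (Finset.range_subset_range.2 (by omega : m.toNat + 1 ≤ M + 1))]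
    · simp [hmt]
    · intro k _ hk
      simp only [Finset.mem_range, not_lt] at hk
      rw [hz_negIdx (by omega : (m.toNat:ℤ) - (k:ℤ) < 0), mul_zero]
  · rw [hz_negIdx h]
    symm
    apply Finset.sum_eq_zero
    intro k _
    rw [hz_negIdx (by omega : m - (k:ℤ) < 0), mul_zero]

lemma hh_swap (x y : K) (L : List K) (m : ℕ) :
    hh m (x :: y :: L) = hh m (y :: x :: L) := by
  have e : ∀ a b : K, hh m (a :: b :: L)
      = ∑ k ∈ Finset.range (m+1), ∑ l ∈ Finset.range (m+1),
          a ^ k * (b ^ l * hz ((m:ℤ) - k - l) L) := by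
    intro a b
    rw [hh_cons_sum]
    apply Finset.sum_congr rfl
    intro k hk
    rw [hz_cons_sum b L ((m:ℤ) - k) m (by simp at hk; omega), Finset.mul_sum]
  rw [e, e, Finset.sum_comm]
  apply Finset.sum_congr rfl; intro k _
  apply Finset.sum_congr rfl; intro l _
  rw [(by ring : (m:ℤ) - k - l = (m:ℤ) - l - k)]; ring

lemma hh_middle (A : List K) (x : K) (B : List K) (m : ℕ) :
    hh m (A ++ x :: B) = hh m (x :: (A ++ B)) := by
  induction A generalizing m with
  | nil => rfl
  | cons a A ih =>
    have ihz : ∀ mm : ℤ, hz mm (A ++ x :: B) = hz mm (x :: (A ++ B)) := by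
      intro mm; unfold hz; split <;> simp [ih]
    calc hh m (a :: (A ++ x :: B))
        = ∑ k ∈ Finset.range (m+1), a ^ k * hz ((m:ℤ) - k) (A ++ x :: B) := hh_cons_sum ..
      _ = ∑ k ∈ Finset.range (m+1), a ^ k * hz ((m:ℤ) - k) (x :: (A ++ B)) := by
          simp only [ihz]
      _ = hh m (a :: x :: (A ++ B)) := (hh_cons_sum ..).symm
      _ = hh m (x :: a :: (A ++ B)) := hh_swap ..

lemma hz_middle (A : List K) (x : K) (B : List K) (m : ℤ) :
    hz m (A ++ x :: B) = hz m (x :: (A ++ B)) := by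
  unfold hz; split <;> simp [hh_middle]

lemma hh_negList (L : List K) : ∀ m : ℕ, hh m (negList L) = (-1) ^ m * hh m L := by
  induction L with
  | nil => intro m; cases m with
    | zero => simp [hh_zero]
    | succ m => simp [negList, hh_nil]
  | cons x xs ih =>
    intro m
    induction m using Nat.strong_induction_on with
    | _ m ihm =>
      cases m with
      | zero => simp [hh_zero]
      | succ m =>
        have hcons : negList (x :: xs) = (-x) :: negList xs := by simp [negList]
        rw [hcons, hh_cons, ← hcons, ihm m (by omega), ih (m+1), hh_cons]
        ring

/-- parity sign -/
def eps (m : ℤ) : K := if m % 2 = 0 then 1 else -1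

lemma hz_negList (m : ℤ) (L : List K) :
    hz m (negList L) = eps m * hz m L := by
  rcases le_or_gt 0 m with h | h
  · rw [hz, if_pos h, hz, if_pos h, hh_negList]
    unfold eps
    congr 1
    by_cases hp : m % 2 = 0
    · rw [if_pos hp, Even.neg_one_pow (Nat.even_iff.2 (by omega))]
    · rw [if_neg hp, Odd.neg_one_pow (Nat.odd_iff.2 (by omega))]
  · rw [hz_negIdx h, hz_negIdx h, mul_zero]

lemma eps_congr {a b : ℤ} (h : a % 2 = b % 2) : (eps a : K) = eps b := by
  unfold eps; rw [h]

lemma eps_mul (a b : ℤ) : (eps a : K) * eps b = eps (a + b) := by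
  unfold eps
  by_cases ha : a % 2 = 0 <;> by_cases hb : b % 2 = 0
  · rw [if_pos ha, if_pos hb, if_pos (by omega), one_mul]
  · rw [if_pos ha, if_neg hb, if_neg (by omega), one_mul]
  · rw [if_neg ha, if_pos hb, if_neg (by omega), mul_one]
  · rw [if_neg ha, if_neg hb, if_pos (by omega)]
    ring

lemma eps_nat (k : ℕ) : (eps (k : ℤ) : K) = (-1) ^ k := by
  unfold eps
  by_cases hp : (k:ℤ) % 2 = 0
  · rw [if_pos hp, Even.neg_one_pow (Nat.even_iff.2 (by omega))]
  · rw [if_neg hp, Odd.neg_one_pow (Nat.odd_iff.2 (by omega))]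

end AuxLemmas

end

/-- `𝔬_λ(-X, -X̄, -1) = (-1)^{|λ|} so_λ(X)` and
`𝔰𝔬⁻_μ(-X, -X̄, -1) = oe_μ(-X, -1)`. -/
theorem stmt2 (n : ℕ) (X : List ℂ) (hX : X.length = n) (hX0 : ∀ x ∈ X, x ≠ 0)
    (lam : ℕ → ℕ) (hlam : Antitone lam) (hlamlen : ∀ i, n ≤ i → lam i = 0)
    (mu : ℕ → ℕ) (hmu : Antitone mu) (hmulen : ∀ i, n + 1 ≤ i → mu i = 0) :
    uo lam n (negList X ++ negList (invList X) ++ [-1]) =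
        (-1 : ℂ) ^ psum lam n * soChar lam n X ∧
      usoNeg mu (n + 1) (negList X ++ negList (invList X) ++ [-1]) =
        oeChar mu (n + 1) (negList X ++ [-1]) := by
  constructor
  · -- Part 1
    have hneg : negList X ++ negList (invList X) ++ [-1]
        = negList (X ++ invList X ++ [(1:ℂ)]) := by
      simp [negList]
    rw [hneg]
    unfold uo soChar
    set Y := X ++ invList X ++ [(1:ℂ)] with hY
    have hent : (Matrix.of fun i j : Fin n =>
          hz ((lam i : ℤ) - i + j) (negList Y) - hz ((lam i : ℤ) - i - j - 2) (negList Y))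
        = Matrix.of fun i j : Fin n => (eps (j:ℤ) : ℂ) *
            ((Matrix.of fun i j : Fin n => (eps ((lam i : ℤ) - i) : ℂ) *
              (Matrix.of fun i j : Fin n =>
                hz ((lam i : ℤ) - i + j) Y - hz ((lam i : ℤ) - i - j - 2) Y) i j) i j) := by
      ext i j
      simp only [Matrix.of_apply]
      rw [hz_negList, hz_negList,
        eps_congr (by omega : ((lam i : ℤ) - i - j - 2) % 2 = ((lam i : ℤ) - i + j) % 2),
        ← eps_mul]
      ring
    rw [hent, Matrix.det_mul_row, Matrix.det_mul_column, ← mul_assoc, ← Finset.prod_mul_distrib]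
    congr 1
    have : ∀ i : Fin n, (eps (i:ℤ) : ℂ) * eps ((lam i : ℤ) - i) = (-1:ℂ) ^ lam i := by
      intro i
      rw [eps_mul, (by ring : (i:ℤ) + ((lam i : ℤ) - i) = (lam i : ℤ)), eps_nat]
    rw [Finset.prod_congr rfl fun i _ => this i, Finset.prod_pow_eq_pow_sum]
    congr 1
    rw [psum, ← Fin.sum_univ_eq_sum_range (fun i => lam i) n]
  · -- Part 2
    set Z := negList X ++ negList (invList X) ++ [(-1:ℂ)] with hZ
    set W : List ℂ := (-1 : ℂ) :: Z with hWdef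
    have hinvneg : invList (negList X) = negList (invList X) := by
      simp only [invList, negList, List.map_map]
      congr 1
      funext x
      simp [inv_neg]
    have hW : ∀ m : ℤ, hz m ((negList X ++ [-1]) ++ invList (negList X ++ [-1])) = hz m W := by
      intro m
      have hlist : (negList X ++ [(-1:ℂ)]) ++ invList (negList X ++ [-1])
          = negList X ++ (-1 :: (negList (invList X) ++ [-1])) := by
        have h1 : invList (negList X ++ [(-1:ℂ)]) = negList (invList X) ++ [-1] := by
          rw [show invList (negList X ++ [(-1:ℂ)])
              = invList (negList X) ++ invList [(-1:ℂ)] from List.map_append .., hinvneg]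
          norm_num [invList]
        rw [h1]
        simp
      rw [hlist, hz_middle]
      congr 1
      rw [hWdef, hZ]
      simp
    have hZW : ∀ m : ℤ, hz m Z = hz m W + hz (m-1) W := by
      intro m
      have := hz_cons_rec m (-1 : ℂ) Z
      rw [← hWdef] at this
      rw [this]
      ring
    unfold usoNeg oeChar
    set b : Fin (n+1) → ℤ := fun i => (mu i : ℤ) - i with hb
    set G : Matrix (Fin (n+1)) (Fin (n+1)) ℂ := Matrix.of fun i j : Fin (n+1) =>
      hz (b i + j) W - hz (b i - j - 2) W with hG
    have hRHS : (Matrix.of fun i j : Fin (n+1) =>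
        hz ((mu i : ℤ) - i + j) (negList X ++ [-1] ++ invList (negList X ++ [-1])) -
          hz ((mu i : ℤ) - i - j - 2) (negList X ++ [-1] ++ invList (negList X ++ [-1]))) = G := by
      ext i j
      simp only [Matrix.of_apply, hG, hb, hW]
    rw [hRHS]
    set U : Matrix (Fin (n+1)) (Fin (n+1)) ℂ := Matrix.of fun k j : Fin (n+1) =>
      (if k = j then (1:ℂ) else 0) + (if (k:ℕ)+1 = (j:ℕ) then 1 else 0) with hU
    have hdetU : U.det = 1 := by
      rw [Matrix.det_of_upperTriangular (M := U) ?ht]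
      · apply Finset.prod_eq_one
        intro k _
        simp [hU]
      · intro i j hij
        simp only [id] at hij
        simp only [hU, Matrix.of_apply]
        rw [if_neg (by intro h; subst h; exact absurd hij (lt_irrefl _)),
          if_neg (by omega : ¬ (i:ℕ)+1 = (j:ℕ)), add_zero]
    have hFG : (Matrix.of fun i j : Fin (n+1) =>
        hz ((mu i : ℤ) - i + j) Z - hz ((mu i : ℤ) - i - j - 1) Z) = G * U := by
      ext i j
      rw [Matrix.mul_apply]
      have hsum : ∑ k : Fin (n+1), G i k * U k j
          = G i j + ∑ k : Fin (n+1), (if (k:ℕ)+1 = (j:ℕ) then G i k else 0) := by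
        simp only [hU, Matrix.of_apply, mul_add, mul_ite, mul_one, mul_zero]
        rw [Finset.sum_add_distrib, Finset.sum_ite_eq' Finset.univ j (fun k => G i k),
          if_pos (Finset.mem_univ j)]
      rw [hsum]
      rcases Nat.eq_zero_or_pos (j:ℕ) with hj | hj
      · have h2 : ∑ k : Fin (n+1), (if (k:ℕ)+1 = (j:ℕ) then G i k else 0) = 0 := by
          apply Finset.sum_eq_zero
          intro k _
          rw [if_neg (by omega)]
        rw [h2, add_zero]
        simp only [Matrix.of_apply, hG, hb]
        have hjz : ((j:ℕ) : ℤ) = 0 := by omega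
        rw [hjz, hZW ((mu i : ℤ) - i + 0), hZW ((mu i : ℤ) - i - 0 - 1)]
        ring_nf
      · obtain ⟨v, hv⟩ : ∃ v, (j:ℕ) = v + 1 := ⟨(j:ℕ) - 1, by omega⟩
        have hvlt : v < n + 1 := by omega
        have h2 : ∑ k : Fin (n+1), (if (k:ℕ)+1 = (j:ℕ) then G i k else 0) = G i ⟨v, hvlt⟩ := by
          rw [Finset.sum_eq_single (⟨v, hvlt⟩ : Fin (n+1))]
          · rw [if_pos (by simp [hv])]
          · intro c _ hc
            rw [if_neg (by
              intro hcc
              apply hc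
              apply Fin.ext
              simp only []
              omega)]
          · intro h
            exact absurd (Finset.mem_univ _) h
        rw [h2]
        simp only [Matrix.of_apply, hG, hb]
        have hjz : ((j:ℕ) : ℤ) = (v:ℤ) + 1 := by omega
        rw [hjz, hZW ((mu i : ℤ) - i + ((v:ℤ)+1)), hZW ((mu i : ℤ) - i - ((v:ℤ)+1) - 1)]
        have e1 : (mu i : ℤ) - i + ((v:ℤ)+1) - 1 = (mu i : ℤ) - i + v := by ring
        have e2 : (mu i : ℤ) - i - ((v:ℤ)+1) - 1 - 1 = (mu i : ℤ) - i - ((v:ℤ)+1) - 2 := by ring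
        have e3 : (mu i : ℤ) - i - ((v:ℤ)+1) - 1 = (mu i : ℤ) - i - v - 2 := by ring
        rw [e2, e3, e1]
        ring
    rw [hFG, Matrix.det_mul, hdetU, mul_one]
end

section
/- Let t ≥ 2 and let μ be a partition with at most tn parts, and set λ = (±μ)_{2tn}. Then the t-core of λ is the empty partition if and only if the t-core of μ is self-conjugate. -/
open scoped BigOperators

section Aux

lemma sortDesc_sorted (L : List ℕ) : (sortDesc L).Pairwise (· ≥ ·) :=
  List.pairwise_insertionSort _ _

lemma sortDesc_perm (L : List ℕ) : (sortDesc L).Perm L :=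
  List.perm_insertionSort _ _

lemma sortDesc_length (L : List ℕ) : (sortDesc L).length = L.length :=
  (sortDesc_perm L).length_eq

lemma sortDesc_mem (L : List ℕ) (x : ℕ) : x ∈ sortDesc L ↔ x ∈ L :=
  (sortDesc_perm L).mem_iff

lemma sortDesc_nodup (L : List ℕ) (h : L.Nodup) : (sortDesc L).Nodup :=
  ((sortDesc_perm L).nodup_iff).2 h

/-- strict decrease for a sorted, nodup list -/
lemma sorted_strict {L : List ℕ} (hs : L.Pairwise (· ≥ ·)) (hn : L.Nodup)
    {i j : ℕ} (hi : i < L.length) (hj : j < L.length) (hij : i < j) :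
    L[j] < L[i] := by
  have h1 : L[j] ≤ L[i] := (List.pairwise_iff_getElem.1 hs) i j hi hj hij
  have h2 : L[i] ≠ L[j] := by
    intro h
    exact absurd ((hn.getElem_inj_iff).1 h) (Nat.ne_of_lt hij)
  omega

lemma sorted_gap {L : List ℕ} (hs : L.Pairwise (· ≥ ·)) (hn : L.Nodup) :
    ∀ d i (h : i + d < L.length), L[i + d] + d ≤ L[i] := by
  intro d
  induction d with
  | zero => intro i h; simp
  | succ d ih =>
    intro i h
    have h1 : i + d < L.length := by omega
    have h2 := ih i h1
    have h3 : L[i + (d+1)] < L[i + d] :=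
      sorted_strict hs hn h1 h (by omega)
    omega

end Aux
section Aux2

/-- the sorted list used in `coreP` -/
def CL (f : ℕ → ℕ) (m s : ℕ) : List ℕ :=
  sortDesc ((List.range s).flatMap fun i =>
    (List.range (nres f m s i)).map fun j => s * j + i)

lemma coreP_eq (f : ℕ → ℕ) (m s k : ℕ) :
    coreP f m s k = if k < m then (CL f m s).getD k 0 + k + 1 - m else 0 := rfl

lemma sum_filter_mod (s : ℕ) (hs : 0 < s) (B : List ℕ) :
    ∑ i ∈ Finset.range s, ((B.filter fun b => b % s = i).length) = B.length := by
  induction B with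
  | nil => simp
  | cons b B ih =>
    have hb : b % s < s := Nat.mod_lt _ hs
    simp only [List.filter_cons]
    have : ∀ i ∈ Finset.range s, ((if (decide (b % s = i)) = true then
        b :: (B.filter fun x => x % s = i) else (B.filter fun x => x % s = i)).length)
        = (if b % s = i then 1 else 0) + (B.filter fun x => x % s = i).length := by
      intro i _
      by_cases h : b % s = i <;> simp [h] <;> omega
    rw [Finset.sum_congr rfl this, Finset.sum_add_distrib, ih,
      Finset.sum_ite_eq (Finset.range s) (b % s) (fun _ => 1)]
    simp [hb]; omega
  
lemma sum_nres (f : ℕ → ℕ) (m s : ℕ) (hs : 0 < s) :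
    ∑ i ∈ Finset.range s, nres f m s i = m := by
  unfold nres
  rw [sum_filter_mod s hs]
  simp [betaList]

lemma CL_length (f : ℕ → ℕ) (m s : ℕ) (hs : 0 < s) :
    (CL f m s).length = m := by
  rw [CL, sortDesc_length, List.length_flatMap]
  have : (List.map (List.length ∘ fun i => (List.range (nres f m s i)).map
      fun j => s * j + i) (List.range s)).sum
      = ∑ i ∈ Finset.range s, nres f m s i := by
    simp only [Function.comp_def, List.length_map, List.length_range]
    rfl
  simp only [Function.comp_def] at this
  rw [this, sum_nres f m s hs]

lemma CL_mem (f : ℕ → ℕ) (m s : ℕ) (hs : 0 < s) (x : ℕ) :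
    x ∈ CL f m s ↔ x / s < nres f m s (x % s) := by
  rw [CL, sortDesc_mem, List.mem_flatMap]
  constructor
  · rintro ⟨i, hi, hx⟩
    simp only [List.mem_map, List.mem_range] at hx hi
    obtain ⟨j, hj, rfl⟩ := hx
    have h1 : (s * j + i) % s = i := by
      rw [Nat.mul_add_mod]; exact Nat.mod_eq_of_lt hi
    have h2 : (s * j + i) / s = j := by
      rw [Nat.mul_add_div hs, Nat.div_eq_of_lt hi]; omega
    rw [h1, h2]; exact hj
  · intro hx
    refine ⟨x % s, by simp [Nat.mod_lt _ hs], ?_⟩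
    simp only [List.mem_map, List.mem_range]
    refine ⟨x / s, hx, ?_⟩
    have := Nat.div_add_mod x s
    omega

lemma CL_nodup (f : ℕ → ℕ) (m s : ℕ) (hs : 0 < s) : (CL f m s).Nodup := by
  apply sortDesc_nodup
  rw [List.nodup_flatMap]
  constructor
  · intro i _
    apply List.Nodup.map
    · intro a b hab
      simp only at hab
      have : s * a = s * b := by omega
      exact Nat.eq_of_mul_eq_mul_left hs this
    · exact List.nodup_range
  · rw [List.pairwise_iff_getElem]
    intro a b ha hb hab
    simp only [Function.onFun]
    intro x hx hx'
    simp only [List.mem_map, List.mem_range, List.getElem_range] at hx hx'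
    obtain ⟨j, hj, rfl⟩ := hx
    obtain ⟨j', hj', he⟩ := hx'
    have h1 : a < s := by simpa using ha
    have h2 : b < s := by simpa using hb
    have hm : (s * j + a) % s = (s * j' + b) % s := by rw [he]
    rw [Nat.mul_add_mod, Nat.mul_add_mod, Nat.mod_eq_of_lt h1, Nat.mod_eq_of_lt h2] at hm
    omega

end Aux2
section Aux3

lemma nres_le_of_mem_lt (f : ℕ → ℕ) (m s q : ℕ) (hs : 0 < s)
    (h : ∀ x ∈ CL f m s, x < s * q) : ∀ i < s, nres f m s i ≤ q := by
  intro i hi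
  by_cases h0 : nres f m s i = 0
  · omega
  · have hmem : s * (nres f m s i - 1) + i ∈ CL f m s := by
      rw [CL_mem f m s hs]
      have h1 : (s * (nres f m s i - 1) + i) % s = i := by
        rw [Nat.mul_add_mod]; exact Nat.mod_eq_of_lt hi
      have h2 : (s * (nres f m s i - 1) + i) / s = nres f m s i - 1 := by
        rw [Nat.mul_add_div hs, Nat.div_eq_of_lt hi]; omega
      rw [h1, h2]; omega
    have := h _ hmem
    have : s * (nres f m s i - 1) < s * q := by omega
    have := Nat.lt_of_mul_lt_mul_left this
    omega

lemma coreP_zero_iff (f : ℕ → ℕ) (s q : ℕ) (hs : 0 < s) :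
    (∀ k, coreP f (s * q) s k = 0) ↔ ∀ i < s, nres f (s * q) s i = q := by
  set m := s * q with hm
  have hlen : (CL f m s).length = m := CL_length f m s hs
  constructor
  · intro h
    -- all elements of CL are < m
    have hbound : ∀ x ∈ CL f m s, x < s * q := by
      intro x hx
      rw [List.mem_iff_getElem] at hx
      obtain ⟨k, hk, rfl⟩ := hx
      have hkm : k < m := by omega
      have := h k
      rw [coreP_eq, if_pos hkm, List.getD_eq_getElem _ _ hk] at this
      omega
    have hle := nres_le_of_mem_lt f m s q hs hbound
    by_contra hne
    push_neg at hne
    obtain ⟨i, hi, hne⟩ := hne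
    have hlt : nres f m s i < q := by
      have := hle i hi; omega
    have hsum := sum_nres f m s hs
    have : ∑ j ∈ Finset.range s, nres f m s j < ∑ _j ∈ Finset.range s, q :=
      Finset.sum_lt_sum (fun j hj => hle j (Finset.mem_range.1 hj))
        ⟨i, Finset.mem_range.2 hi, hlt⟩
    rw [hsum, Finset.sum_const, Finset.card_range, smul_eq_mul] at this
    omega
  · intro h k
    rw [coreP_eq]
    by_cases hk : k < m
    · rw [if_pos hk]
      have hk' : k < (CL f m s).length := by omega
      have h0' : 0 < (CL f m s).length := by omega
      have hgap : (CL f m s)[k]'hk' + k ≤ (CL f m s)[0]'h0' := by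
        have := sorted_gap (L := CL f m s) (sortDesc_sorted _) (CL_nodup f m s hs) k 0 (by omega)
        simpa using this
      have h0mem : (CL f m s)[0]'h0' ∈ CL f m s := List.getElem_mem _
      rw [CL_mem f m s hs] at h0mem
      have hres : (CL f m s)[0]'h0' % s < s := Nat.mod_lt _ hs
      have h0lt : (CL f m s)[0]'h0' < m := by
        have := h _ hres
        rw [this] at h0mem
        have := (Nat.div_lt_iff_lt_mul hs).1 h0mem
        have hqs : q * s = s * q := Nat.mul_comm q s
        omega
      rw [List.getD_eq_getElem _ _ hk']
      omega
    · rw [if_neg hk]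

end Aux3
section Aux4

def kap (L : List ℕ) (m : ℕ) : ℕ → ℕ := fun k =>
  if k < m then L.getD k 0 + k + 1 - m else 0

lemma coreP_eq_kap (f : ℕ → ℕ) (m s : ℕ) : coreP f m s = kap (CL f m s) m :=
  funext fun k => coreP_eq f m s k

def Gp (L : List ℕ) (v : ℕ) : ℕ := ((Finset.range v).filter (· ∈ L)).card

def Gc (L : List ℕ) (m v : ℕ) : ℕ :=
  ((Finset.range m).filter fun a => v ≤ L.getD a 0).card

/-- a downward-closed finset of naturals: membership iff below card -/
lemma dc_mem_iff {s : Finset ℕ} (hdc : ∀ a b : ℕ, a ≤ b → b ∈ s → a ∈ s) (a : ℕ) :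
    a ∈ s ↔ a < s.card := by
  constructor
  · intro ha
    have hsub : Finset.range (a + 1) ⊆ s := by
      intro x hx
      exact hdc x a (by simpa using Nat.lt_succ_iff.1 (Finset.mem_range.1 hx)) ha
    have := Finset.card_le_card hsub
    simpa using this
  · intro ha
    by_contra hna
    have hsub : s ⊆ Finset.range a := by
      intro b hb
      rw [Finset.mem_range]
      by_contra hba
      exact hna (hdc a b (by omega) hb)
    have := Finset.card_le_card hsub
    simp at this
    omega

section SortedL

variable {L : List ℕ} {m : ℕ} (hs : L.Pairwise (· ≥ ·)) (hn : L.Nodup)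
  (hl : L.length = m)

include hs hn hl

lemma Gc_lt_iff (v a : ℕ) : a < Gc L m v ↔ a < m ∧ v ≤ L.getD a 0 := by
  have hdc : ∀ a b : ℕ, a ≤ b →
      b ∈ (Finset.range m).filter (fun a => v ≤ L.getD a 0) →
      a ∈ (Finset.range m).filter (fun a => v ≤ L.getD a 0) := by
    intro a b hab hb
    simp only [Finset.mem_filter, Finset.mem_range] at hb ⊢
    obtain ⟨hbm, hbv⟩ := hb
    have ham : a < m := by omega
    refine ⟨ham, ?_⟩
    rcases Nat.eq_or_lt_of_le hab with rfl | hab'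
    · exact hbv
    · have h1 : b < L.length := by omega
      have h2 : a < L.length := by omega
      have := (List.pairwise_iff_getElem.1 hs) a b h2 h1 hab'
      rw [List.getD_eq_getElem _ _ h1, List.getD_eq_getElem _ _ h2] at *
      omega
  rw [Gc, ← dc_mem_iff hdc a, Finset.mem_filter, Finset.mem_range]

lemma Gc_add_Gp (v : ℕ) : Gc L m v + Gp L v = m := by
  have hsplit := Finset.card_filter_add_card_filter_not
    (s := Finset.range m) (p := fun a => v ≤ L.getD a 0)
  rw [Finset.card_range] at hsplit
  have hbij : ((Finset.range m).filter fun a => ¬ (v ≤ L.getD a 0)).card = Gp L v := by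
    rw [Gp]
    apply Finset.card_nbij (fun a => L.getD a 0)
    · intro a ha
      simp only [Finset.mem_coe, Finset.mem_filter, Finset.mem_range, not_le] at ha ⊢
      obtain ⟨ham, hav⟩ := ha
      have h2 : a < L.length := by omega
      rw [List.getD_eq_getElem _ _ h2] at hav ⊢
      exact ⟨hav, List.getElem_mem _⟩
    · intro a ha b hb hab
      simp only [Finset.coe_filter, Set.mem_setOf_eq, Finset.mem_range] at ha hb
      have h2 : a < L.length := by omega
      have h3 : b < L.length := by omega
      simp only [List.getD_eq_getElem _ _ h2, List.getD_eq_getElem _ _ h3] at hab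
      exact (hn.getElem_inj_iff).1 hab
    · intro x hx
      simp only [Finset.coe_filter, Set.mem_setOf_eq, Finset.mem_range, Set.mem_image] at hx ⊢
      obtain ⟨hxv, hxL⟩ := hx
      rw [List.mem_iff_getElem] at hxL
      obtain ⟨k, hk, hkx⟩ := hxL
      refine ⟨k, ?_, ?_⟩
      · simp only [Finset.mem_coe, Finset.mem_filter, Finset.mem_range, not_le]
        rw [List.getD_eq_getElem _ _ hk, hkx]
        exact ⟨by omega, hxv⟩
      · rw [List.getD_eq_getElem _ _ hk, hkx]
  rw [Gc]
  omega

omit hs hn hl in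
lemma Gc_zero : Gc L m 0 = m := by
  rw [Gc]
  rw [Finset.filter_true_of_mem (fun a _ => Nat.zero_le _), Finset.card_range]

lemma Gc_le (v : ℕ) : Gc L m v ≤ m := by
  have := Gc_add_Gp hs hn hl v
  omega

omit hs hn hl in
lemma Gp_succ (v : ℕ) : Gp L (v + 1) = Gp L v + if v ∈ L then 1 else 0 := by
  rw [Gp, Gp, Finset.range_add_one, Finset.filter_insert]
  by_cases hv : v ∈ L
  · rw [if_pos hv, Finset.card_insert_of_notMem (by simp), if_pos hv]
  · rw [if_neg hv, if_neg hv]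
    simp

lemma Gc_succ (v : ℕ) : Gc L m v = Gc L m (v + 1) + if v ∈ L then 1 else 0 := by
  have h1 := Gc_add_Gp hs hn hl v
  have h2 := Gc_add_Gp hs hn hl (v + 1)
  have h3 := Gp_succ (L := L) v
  omega

lemma Gp_full (v : ℕ) (h : Gp L v = v) : ∀ w < v, w ∈ L := by
  intro w hw
  have hsub : (Finset.range v).filter (· ∈ L) = Finset.range v := by
    apply Finset.eq_of_subset_of_card_le (Finset.filter_subset _ _)
    rw [Finset.card_range]
    rw [Gp] at h
    omega
  have : w ∈ (Finset.range v).filter (· ∈ L) := by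
    rw [hsub]; exact Finset.mem_range.2 hw
  exact (Finset.mem_filter.1 this).2

lemma sorted_gapD (i j : ℕ) (hij : i ≤ j) (hj : j < L.length) :
    L.getD j 0 + (j - i) ≤ L.getD i 0 := by
  have h1 : i + (j - i) < L.length := by omega
  have h2 := sorted_gap hs hn (j - i) i h1
  have h3 : L.getD (i + (j - i)) 0 + (j - i) ≤ L.getD i 0 := by
    rw [List.getD_eq_getElem _ _ h1, List.getD_eq_getElem _ _ (show i < L.length by omega)]
    exact h2
  rw [show i + (j - i) = j from by omega] at h3
  exact h3

lemma kap_lt_iff (a b : ℕ) : b < kap L m a ↔ a < Gc L m (m + b - a) := by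
  rw [Gc_lt_iff hs hn hl]
  rw [kap]
  by_cases ha : a < m
  · rw [if_pos ha]
    constructor
    · intro h; exact ⟨ha, by omega⟩
    · intro ⟨_, h⟩; omega
  · rw [if_neg ha]
    constructor
    · omega
    · intro ⟨h, _⟩; omega

lemma conj_lt_iff (a b : ℕ) : a < conjB (kap L m) m b ↔ b < kap L m a := by
  have hmono : ∀ j j' : ℕ, j ≤ j' → kap L m j' ≤ kap L m j := by
    intro j j' hjj
    rw [kap, kap]
    by_cases hj' : j' < m
    · rw [if_pos hj', if_pos (by omega)]
      have := sorted_gapD hs hn hl j j' hjj (by omega)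
      omega
    · rw [if_neg hj']; omega
  have hdc : ∀ a b' : ℕ, a ≤ b' →
      b' ∈ (Finset.range m).filter (fun j => b < kap L m j) →
      a ∈ (Finset.range m).filter (fun j => b < kap L m j) := by
    intro a b' hab hb'
    simp only [Finset.mem_filter, Finset.mem_range] at hb' ⊢
    have := hmono a b' hab
    exact ⟨by omega, by omega⟩
  rw [conjB, ← dc_mem_iff hdc a, Finset.mem_filter, Finset.mem_range]
  constructor
  · intro ⟨_, h⟩; exact h
  · intro h
    refine ⟨?_, h⟩
    by_contra ham
    rw [kap, if_neg (by omega)] at h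
    omega

lemma selfconj_iff_sym :
    IsSelfConj (kap L m) m ↔ ∀ a b, (b < kap L m a ↔ a < kap L m b) := by
  constructor
  · intro h a b
    calc b < kap L m a ↔ b < conjB (kap L m) m a := by rw [h a]
      _ ↔ a < kap L m b := conj_lt_iff hs hn hl b a
  · intro h k
    have e : ∀ x, (x < conjB (kap L m) m k ↔ x < kap L m k) := by
      intro x
      exact (conj_lt_iff hs hn hl x k).trans (h x k)
    have h1 := e (kap L m k)
    have h2 := e (conjB (kap L m) m k)
    omega

end SortedL

end Aux4
section Aux5

variable {L : List ℕ} {m : ℕ} (hs : L.Pairwise (· ≥ ·)) (hn : L.Nodup)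
  (hl : L.length = m)

include hs hn hl

lemma Gc_pos_of_mem {x v : ℕ} (hx : x ∈ L) (hv : v ≤ x) : 0 < Gc L m v := by
  rw [List.mem_iff_getElem] at hx
  obtain ⟨k, hk, rfl⟩ := hx
  rw [Gc_lt_iff hs hn hl]
  refine ⟨by omega, ?_⟩
  have := sorted_gapD hs hn hl 0 k (Nat.zero_le _) hk
  rw [List.getD_eq_getElem _ _ hk] at this
  omega

lemma exists_mem_of_Gc_pos {v : ℕ} (h : 0 < Gc L m v) : ∃ x ∈ L, v ≤ x := by
  rw [Gc_lt_iff hs hn hl] at h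
  obtain ⟨hm, hv⟩ := h
  have h0 : 0 < L.length := by omega
  refine ⟨L.getD 0 0, ?_, hv⟩
  rw [List.getD_eq_getElem _ _ h0]
  exact List.getElem_mem _

lemma thresh_iff (A B v : ℕ) : (∀ a, (a < A ↔ a + v < B)) ↔ A = B - v := by
  constructor
  · intro h
    have h1 := h A
    have h2 := h (B - v)
    omega
  · intro h a
    omega

lemma selfconj_iff_vform :
    IsSelfConj (kap L m) m ↔ ∀ v a, (a < Gc L m (m + v) ↔ a + v < Gc L m (m - v)) := by
  rw [selfconj_iff_sym hs hn hl]
  have sym : (∀ a b, (b < kap L m a ↔ a < kap L m b)) ↔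
      ∀ a b, (a < Gc L m (m + b - a) ↔ b < Gc L m (m + a - b)) := by
    constructor
    · intro h a b
      rw [← kap_lt_iff hs hn hl, ← kap_lt_iff hs hn hl]
      exact h a b
    · intro h a b
      rw [kap_lt_iff hs hn hl, kap_lt_iff hs hn hl]
      exact h a b
  rw [sym]
  constructor
  · intro h v a
    have := h a (a + v)
    rw [show m + (a + v) - a = m + v by omega, show m + a - (a + v) = m - v by omega] at this
    exact this
  · intro h a b
    rcases le_total a b with hab | hab
    · have := h (b - a) a
      rw [show m + (b - a) = m + b - a by omega, show a + (b - a) = b by omega,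
        show m - (b - a) = m + a - b by omega] at this
      exact this
    · have := h (a - b) b
      rw [show m + (a - b) = m + a - b by omega, show b + (a - b) = a by omega,
        show m - (a - b) = m + b - a by omega] at this
      exact this.symm

lemma selfconj_iff_dag :
    IsSelfConj (kap L m) m ↔ ∀ v, Gc L m (m + v) = Gc L m (m - v) - v := by
  rw [selfconj_iff_vform hs hn hl]
  constructor
  · intro h v
    exact (thresh_iff hs hn hl _ _ v).1 (h v)
  · intro h v
    exact (thresh_iff hs hn hl _ _ v).2 (h v)

lemma dag_to_flip (hdag : ∀ v, Gc L m (m + v) = Gc L m (m - v) - v) :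
    (∀ x ∈ L, x < 2 * m) ∧ ∀ x < m, ((m + x) ∈ L ↔ ¬((m - 1 - x) ∈ L)) := by
  have hbound : ∀ x ∈ L, x < 2 * m := by
    intro x hx
    by_contra h2m
    have hpos : 0 < Gc L m (m + m) := Gc_pos_of_mem hs hn hl hx (by omega)
    have := hdag m
    rw [show m - m = 0 by omega, Gc_zero (L := L) (m := m)] at this
    omega
  refine ⟨hbound, ?_⟩
  have hQ : ∀ v ≤ m, Gc L m (m - v) = Gc L m (m + v) + v ∧
      (∀ x < v, ((m + x) ∈ L ↔ ¬((m - 1 - x) ∈ L))) := by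
    intro v
    induction v with
    | zero => intro _; simp
    | succ v ih =>
      intro hv1
      obtain ⟨hQv, hFv⟩ := ih (by omega)
      have r1 := Gc_succ hs hn hl (m + v)
      have r2 := Gc_succ hs hn hl (m - v - 1)
      rw [show m - v - 1 + 1 = m - v by omega] at r2
      have hd := hdag (v + 1)
      rw [show m + (v + 1) = m + v + 1 by omega, show m - (v + 1) = m - v - 1 by omega] at hd
      rw [show m - (v + 1) = m - v - 1 by omega, show m + (v + 1) = m + v + 1 by omega]
      by_cases h1 : (m + v) ∈ L <;> by_cases h2 : (m - v - 1) ∈ L <;>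
        simp only [h1, h2, if_pos, if_neg, if_true, if_false, not_false_iff, not_true] at r1 r2 ⊢
      · omega
      · refine ⟨by omega, ?_⟩
        intro x hx
        rcases Nat.lt_or_ge x v with hxv | hxv
        · exact hFv x hxv
        · have hxe : x = v := by omega
          subst hxe
          rw [show m - 1 - x = m - x - 1 by omega]
          simp [h1, h2]
      · refine ⟨by omega, ?_⟩
        intro x hx
        rcases Nat.lt_or_ge x v with hxv | hxv
        · exact hFv x hxv
        · have hxe : x = v := by omega
          subst hxe
          rw [show m - 1 - x = m - x - 1 by omega]
          simp [h1, h2]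
      · exfalso
        have hg0 : Gc L m (m + v + 1) = 0 := by omega
        have hgv : Gc L m (m - v) = v := by omega
        have hgp := Gc_add_Gp hs hn hl (m - v)
        have hfull := Gp_full hs hn hl (m - v) (by omega)
        exact h2 (hfull (m - v - 1) (by omega))
  intro x hx
  exact (hQ m (le_refl m)).2 x hx

lemma flip_to_dag (hb : ∀ x ∈ L, x < 2 * m)
    (hf : ∀ x < m, ((m + x) ∈ L ↔ ¬((m - 1 - x) ∈ L))) :
    ∀ v, Gc L m (m + v) = Gc L m (m - v) - v := by
  have hQ : ∀ v ≤ m, Gc L m (m - v) = Gc L m (m + v) + v := by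
    intro v
    induction v with
    | zero => intro _; simp
    | succ v ih =>
      intro hv1
      have hQv := ih (by omega)
      have r1 := Gc_succ hs hn hl (m + v)
      have r2 := Gc_succ hs hn hl (m - v - 1)
      rw [show m - v - 1 + 1 = m - v by omega] at r2
      have hfv := hf v (by omega)
      rw [show m - 1 - v = m - v - 1 by omega] at hfv
      rw [show m - (v + 1) = m - v - 1 by omega, show m + (v + 1) = m + v + 1 by omega]
      by_cases h1 : (m + v) ∈ L <;> by_cases h2 : (m - v - 1) ∈ L <;>
        simp only [h1, h2, if_true, if_false, not_true, not_false_iff,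
          iff_true, iff_false, true_iff, false_iff] at r1 r2 hfv <;> omega
  intro v
  rcases le_or_gt v m with hv | hv
  · have := hQ v hv
    omega
  · have h0 : Gc L m (m + v) = 0 := by
      by_contra hpos
      obtain ⟨x, hxL, hxv⟩ := exists_mem_of_Gc_pos hs hn hl (v := m + v) (by omega)
      have := hb x hxL
      omega
    rw [show m - v = 0 by omega, Gc_zero (L := L) (m := m), h0]
    omega

lemma selfconj_iff_flip :
    IsSelfConj (kap L m) m ↔
      (∀ x ∈ L, x < 2 * m) ∧ ∀ x < m, ((m + x) ∈ L ↔ ¬((m - 1 - x) ∈ L)) := by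
  rw [selfconj_iff_dag hs hn hl]
  constructor
  · exact dag_to_flip hs hn hl
  · intro ⟨hb, hf⟩
    exact flip_to_dag hs hn hl hb hf

end Aux5
section Aux6

lemma tmod_eq {t : ℕ} (ht : 0 < t) {j r : ℕ} (hr : r < t) : (t * j + r) % t = r := by
  rw [Nat.mul_add_mod]; exact Nat.mod_eq_of_lt hr

lemma tdiv_eq {t : ℕ} (ht : 0 < t) {j r : ℕ} (hr : r < t) : (t * j + r) / t = j := by
  rw [Nat.mul_add_div ht, Nat.div_eq_of_lt hr]; omega

lemma selfconj_core_iff (f : ℕ → ℕ) (t n : ℕ) (ht : 0 < t) :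
    IsSelfConj (coreP f (t * n) t) (t * n) ↔
      (∀ r < t, nres f (t * n) t r ≤ 2 * n) ∧
      (∀ r < t, ∀ a < n,
        (a + n < nres f (t * n) t r ↔ nres f (t * n) t (t - 1 - r) + a < n)) := by
  set m := t * n with hm
  set L := CL f m t with hL
  set N := fun r => nres f m t r with hN
  have hsor : L.Pairwise (· ≥ ·) := sortDesc_sorted _
  have hnd : L.Nodup := CL_nodup f m t ht
  have hlen : L.length = m := CL_length f m t ht
  have hmem : ∀ x, x ∈ L ↔ x / t < N (x % t) := CL_mem f m t ht
  rw [coreP_eq_kap, ← hL, selfconj_iff_flip hsor hnd hlen]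
  have e1 : (∀ x ∈ L, x < 2 * m) ↔ ∀ r < t, N r ≤ 2 * n := by
    constructor
    · intro h r hr
      apply nres_le_of_mem_lt f m t (2 * n) ht _ r hr
      intro x hx
      have := h x hx
      have : t * (2 * n) = 2 * m := by rw [hm]; ring
      omega
    · intro h x hx
      rw [hmem] at hx
      have hr : x % t < t := Nat.mod_lt _ ht
      have h1 : x / t < 2 * n := lt_of_lt_of_le hx (h _ hr)
      have h2 : t * (x / t + 1) ≤ t * (2 * n) := Nat.mul_le_mul_left t (by omega)
      have h3 : t * (x / t + 1) = t * (x / t) + t := by ring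
      have h4 : t * (2 * n) = 2 * m := by rw [hm]; ring
      have h5 := Nat.div_add_mod x t
      omega
  rw [e1]
  constructor
  · intro ⟨hb, hf⟩
    refine ⟨hb, ?_⟩
    intro r hr a ha
    have hx : t * a + r < m := by
      have h1 : t * (a + 1) ≤ t * n := Nat.mul_le_mul_left t (by omega)
      have h2 : t * (a + 1) = t * a + t := by ring
      omega
    have := hf (t * a + r) hx
    have hma : m + (t * a + r) = t * (n + a) + r := by rw [hm]; ring
    have hmb : m - 1 - (t * a + r) = t * (n - 1 - a) + (t - 1 - r) := by
      have h1 : t * (n - 1 - a) + t * (a + 1) = t * n := by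
        rw [← Nat.mul_add]; congr 1; omega
      have h2 : t * (a + 1) = t * a + t := by ring
      omega
    rw [hma, hmb, hmem, hmem, tmod_eq ht hr, tdiv_eq ht hr,
      tmod_eq ht (show t - 1 - r < t by omega), tdiv_eq ht (show t - 1 - r < t by omega)] at this
    have e1 : N r = nres f m t r := rfl
    have e2 : N (t - 1 - r) = nres f m t (t - 1 - r) := rfl
    omega
  · intro ⟨hb, hf⟩
    refine ⟨hb, ?_⟩
    intro x hx
    have hr : x % t < t := Nat.mod_lt _ ht
    have ha : x / t < n := by
      rw [Nat.div_lt_iff_lt_mul ht, Nat.mul_comm n t, ← hm]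
      exact hx
    have hdm := Nat.div_add_mod x t
    have hxe : x = t * (x / t) + x % t := by omega
    have := hf (x % t) hr (x / t) ha
    have hma : m + x = t * (n + x / t) + x % t := by rw [hm]; nth_rw 1 [hxe]; ring
    have hmb : m - 1 - x = t * (n - 1 - x / t) + (t - 1 - x % t) := by
      have h1 : t * (n - 1 - x / t) + t * (x / t + 1) = t * n := by
        rw [← Nat.mul_add]; congr 1; omega
      have h2 : t * (x / t + 1) = t * (x / t) + t := by ring
      omega
    rw [hma, hmb, hmem, hmem, tmod_eq ht hr, tdiv_eq ht hr,
      tmod_eq ht (show t - 1 - x % t < t by omega), tdiv_eq ht (show t - 1 - x % t < t by omega)]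
    have e1 : N (x % t) = nres f m t (x % t) := rfl
    have e2 : N (t - 1 - x % t) = nres f m t (t - 1 - x % t) := rfl
    omega

end Aux6
section Aux7

lemma list_range_filter (M : ℕ) (q : ℕ → Prop) [DecidablePred q] :
    ((List.range M).filter (fun k => decide (q k))).length
      = ((Finset.range M).filter q).card := by
  induction M with
  | zero => simp
  | succ M ih =>
    rw [List.range_succ, List.filter_append, List.length_append, ih,
      Finset.range_add_one, Finset.filter_insert]
    by_cases h : q M
    · rw [if_pos h, Finset.card_insert_of_notMem (by simp)]
      simp [h]
    · rw [if_neg h]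
      simp [h]

lemma nres_eq_card (f : ℕ → ℕ) (m s i : ℕ) :
    nres f m s i
      = ((Finset.range m).filter fun k => (f k + (m - 1 - k)) % s = i).card := by
  rw [nres, betaList, List.filter_map, List.length_map]
  exact list_range_filter m (fun k => (f k + (m - 1 - k)) % s = i)

lemma modeq_m1 {t : ℕ} (ht : 0 < t) (c : ℕ) {i : ℕ} (hi : i < t) (b : ℕ) :
    (c + b) % t = i ↔ b % t = (t + i - c % t) % t := by
  set d := c % t with hd
  have hdt : d < t := Nat.mod_lt _ ht
  set r := (t + i - d) % t with hr
  have hrt : r < t := Nat.mod_lt _ ht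
  have show1 : (c + r) % t = i := by
    have hcd : c ≡ d [MOD t] := by rw [hd]; exact (Nat.mod_modEq c t).symm
    have hrr : r ≡ t + i - d [MOD t] := by rw [hr]; exact Nat.mod_modEq _ t
    have h1 : c + r ≡ d + (t + i - d) [MOD t] := Nat.ModEq.add hcd hrr
    have h2 : d + (t + i - d) = t + i := by omega
    have h3 : t + i ≡ i [MOD t] := Nat.add_modEq_left
    have h4 : c + r ≡ i [MOD t] := by
      rw [← h2] at h3
      exact h1.trans h3
    have : (c + r) % t = i % t := h4
    rw [this, Nat.mod_eq_of_lt hi]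
  constructor
  · intro h
    have hmm : c + b ≡ c + r [MOD t] := by
      show (c + b) % t = (c + r) % t
      rw [h, show1]
    have := Nat.ModEq.add_left_cancel' c hmm
    have hb : b % t = r % t := this
    rw [hb, Nat.mod_eq_of_lt hrt]
  · intro h
    have hbr : b ≡ r [MOD t] := by
      show b % t = r % t
      rw [h, Nat.mod_eq_of_lt hrt]
    have := Nat.ModEq.add_left c hbr
    have h5 : (c + b) % t = (c + r) % t := this
    rw [h5, show1]

lemma modeq_m2 {t : ℕ} (ht : 0 < t) (C : ℕ) {i b : ℕ} (hi : i < t) (hiC : i ≤ C)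
    (hb : b ≤ C) : (C - b) % t = i ↔ b % t = (C - i) % t := by
  have e1 : (C - b) % t = i ↔ C ≡ i + b [MOD t] := by
    constructor
    · intro h
      have h1 : C - b ≡ i [MOD t] := by
        show (C - b) % t = i % t
        rw [h, Nat.mod_eq_of_lt hi]
      have h2 := Nat.ModEq.add_right b h1
      rw [show C - b + b = C by omega] at h2
      exact h2
    · intro h
      have h2 := Nat.ModEq.add_right_cancel' b (show C - b + b ≡ i + b [MOD t] by
        rw [show C - b + b = C by omega]; exact h)
      have : (C - b) % t = i % t := h2
      rw [this, Nat.mod_eq_of_lt hi]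
  have e2 : b % t = (C - i) % t ↔ C ≡ i + b [MOD t] := by
    constructor
    · intro h
      have h1 : b ≡ C - i [MOD t] := h
      have h2 := Nat.ModEq.add_left i h1
      rw [show i + (C - i) = C by omega] at h2
      exact h2.symm
    · intro h
      have h2 := Nat.ModEq.add_left_cancel' i (show i + b ≡ i + (C - i) [MOD t] by
        rw [show i + (C - i) = C by omega]; exact h.symm)
      exact h2
  rw [e1, e2]

lemma mod_pair {t s r : ℕ} (ht : 0 < t) (hs : s < t) (hr : r < t)
    (h : (s + r) % t = (t - 1) % t) : s = t - 1 - r := by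
  rw [Nat.mod_eq_of_lt (show t - 1 < t by omega)] at h
  rcases Nat.lt_or_ge (s + r) t with hlt | hge
  · rw [Nat.mod_eq_of_lt hlt] at h
    omega
  · rw [Nat.mod_eq_sub_mod hge, Nat.mod_eq_of_lt (by omega)] at h
    omega

lemma c_sub_d_modeq (t c : ℕ) : c - c % t ≡ 0 [MOD t] := by
  have h1 := Nat.div_add_mod c t
  have h2 : c - c % t = t * (c / t) := by omega
  rw [h2]
  show t * (c / t) % t = 0 % t
  simp [Nat.mul_mod_right]

/-- `r2 i = t - 1 - r1 i` -/
lemma r2_eq (t c : ℕ) (ht : 0 < t) {i : ℕ} (hi : i < t) (hc : t ≤ c) :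
    (c - 1 - i) % t = t - 1 - (t + i - c % t) % t := by
  set d := c % t with hd
  have hdt : d < t := Nat.mod_lt _ ht
  have hdc : d ≤ c := Nat.mod_le _ _
  apply mod_pair ht (Nat.mod_lt _ ht) (Nat.mod_lt _ ht)
  have h1 : (c - 1 - i) % t + (t + i - d) % t ≡ (c - 1 - i) + (t + i - d) [MOD t] :=
    Nat.ModEq.add (Nat.mod_modEq _ t) (Nat.mod_modEq _ t)
  have h2 : (c - 1 - i) + (t + i - d) = (t - 1) + (c - d) := by omega
  have h3 : (t - 1) + (c - d) ≡ (t - 1) + 0 [MOD t] :=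
    Nat.ModEq.add_left (t - 1) (hd ▸ c_sub_d_modeq t c)
  rw [← h2] at h3
  have h4 := h1.trans h3
  rw [Nat.add_zero] at h4
  exact h4

/-- surjectivity of `i ↦ r1 i` -/
lemma r1_surj (t c : ℕ) (ht : 0 < t) {r : ℕ} (hr : r < t) :
    (t + (c % t + r) % t - c % t) % t = r := by
  set d := c % t with hd
  have hdt : d < t := Nat.mod_lt _ ht
  set e := (d + r) % t with he
  have het : e < t := Nat.mod_lt _ ht
  have h1 : t + e - d + d ≡ r + d [MOD t] := by
    rw [show t + e - d + d = t + e by omega]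
    calc t + e ≡ e [MOD t] := Nat.add_modEq_left
      _ ≡ d + r [MOD t] := he ▸ Nat.mod_modEq _ t
      _ = r + d := by omega
  have h2 : t + e - d ≡ r [MOD t] := Nat.ModEq.add_right_cancel' d h1
  have : (t + e - d) % t = r % t := h2
  rw [this, Nat.mod_eq_of_lt hr]

lemma arith_pair (n t : ℕ) (hn : 0 < n) (ht : 0 < t) (N : ℕ → ℕ)
    (hb : ∀ r < t, N r ≤ 2 * n) :
    (∀ r < t, ∀ a < n, (a + n < N r ↔ N (t - 1 - r) + a < n)) ↔
      (∀ r < t, N r + N (t - 1 - r) = 2 * n) := by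
  constructor
  · intro h r hr
    have hr' : t - 1 - r < t := by omega
    have hkey : t - 1 - (t - 1 - r) = r := by omega
    have hA := hb r hr
    have hB := hb _ hr'
    rcases Nat.lt_or_ge n (N r) with h1 | h1
    · have i1 := h r hr (N r - n - 1) (by omega)
      by_cases h2 : N r < 2 * n
      · have i2 := h r hr (N r - n) (by omega)
        omega
      · omega
    · rcases Nat.lt_or_ge n (N (t - 1 - r)) with h3 | h3
      · have i1 := h (t - 1 - r) hr' (N (t - 1 - r) - n - 1) (by omega)
        rw [hkey] at i1
        by_cases h4 : N (t - 1 - r) < 2 * n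
        · have i2 := h (t - 1 - r) hr' (N (t - 1 - r) - n) (by omega)
          rw [hkey] at i2
          omega
        · omega
      · have i1 := h r hr 0 hn
        have i2 := h (t - 1 - r) hr' 0 hn
        rw [hkey] at i2
        omega
  · intro h r hr a ha
    have := h r hr
    omega

end Aux7
section Aux8

lemma nres_lam (t n : ℕ) (ht : 0 < t) (hn : 0 < n) (mu : ℕ → ℕ)
    (hmu : Antitone mu) (hlen : ∀ i, t * n ≤ i → mu i = 0) (i : ℕ) (hi : i < t) :
    nres (negConcat mu mu (t * (2 * n))) (t * (2 * n)) t i =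
      nres mu (t * n) t ((t + i - (mu 0 + t * n) % t) % t) +
      nres mu (t * n) t ((mu 0 + t * n - 1 - i) % t) := by
  have hm1 : 0 < t * n := Nat.mul_pos ht hn
  have hm2 : t * (2 * n) = t * n + t * n := by ring
  rw [nres_eq_card, nres_eq_card, nres_eq_card, hm2,
    Finset.card_filter, Finset.card_filter, Finset.card_filter, Finset.sum_range_add]
  congr 1
  · apply Finset.sum_congr rfl
    intro k hk
    rw [Finset.mem_range] at hk
    have hz : mu (t * n + t * n - 1 - k) = 0 := hlen _ (by omega)
    have hv : negConcat mu mu (t * n + t * n) k + (t * n + t * n - 1 - k)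
        = (mu 0 + t * n) + (mu k + (t * n - 1 - k)) := by
      rw [negConcat, if_pos (by omega : k < t * n + t * n), hz]
      omega
    rw [hv]
    congr 1
    rw [eq_iff_iff]
    exact modeq_m1 ht (mu 0 + t * n) hi (mu k + (t * n - 1 - k))
  · have hpt : ∀ k ∈ Finset.range (t * n),
        (if (negConcat mu mu (t * n + t * n) (t * n + k)
            + (t * n + t * n - 1 - (t * n + k))) % t = i then 1 else 0)
        = (fun j => if (mu j + (t * n - 1 - j)) % t = (mu 0 + t * n - 1 - i) % t
            then 1 else 0) (t * n - 1 - k) := by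
      intro k hk
      rw [Finset.mem_range] at hk
      have hz : mu (t * n + k) = 0 := hlen _ (by omega)
      have hj : t * n + t * n - 1 - (t * n + k) = t * n - 1 - k := by omega
      have hmu0 : mu (t * n - 1 - k) ≤ mu 0 := hmu (Nat.zero_le _)
      have hnc : negConcat mu mu (t * n + t * n) (t * n + k) = mu 0 - mu (t * n - 1 - k) := by
        simp only [negConcat]
        rw [if_pos (by omega : t * n + k < t * n + t * n), hj, hz]
        omega
      have hv : negConcat mu mu (t * n + t * n) (t * n + k)
          + (t * n + t * n - 1 - (t * n + k))
          = (mu 0 + t * n - 1) - (mu (t * n - 1 - k) + (t * n - 1 - (t * n - 1 - k))) := by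
        rw [hnc]
        omega
      rw [hv]
      simp only []
      congr 1
      rw [eq_iff_iff]
      have htn : t * 1 ≤ t * n := Nat.mul_le_mul_left t hn
      rw [Nat.mul_one] at htn
      exact modeq_m2 ht (mu 0 + t * n - 1) hi (by omega)
        (by have := hmu (Nat.zero_le (t * n - 1 - k)); omega)
    rw [Finset.sum_congr rfl hpt]
    exact Finset.sum_range_reflect
      (fun j => if (mu j + (t * n - 1 - j)) % t = (mu 0 + t * n - 1 - i) % t then 1 else 0)
      (t * n)

end Aux8
/-- The `t`-core of `(±μ)_{2tn}` is empty iff the `t`-core of `μ`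
is self-conjugate. -/
theorem stmt9 (t n : ℕ) (ht : 2 ≤ t)
    (mu : ℕ → ℕ) (hmu : Antitone mu) (hlen : ∀ i, t * n ≤ i → mu i = 0) :
    (∀ k, coreP (negConcat mu mu (2 * t * n)) (2 * t * n) t k = 0) ↔
      IsSelfConj (coreP mu (t * n) t) (t * n) := by
  rcases Nat.eq_zero_or_pos n with rfl | hn
  · constructor
    · intro _ k
      simp [IsSelfConj, coreP_eq, conjB]
    · intro _ k
      simp [coreP_eq]
  · have ht0 : 0 < t := by omega
    have h2 : 2 * t * n = t * (2 * n) := by ring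
    rw [h2, coreP_zero_iff (negConcat mu mu (t * (2 * n))) t (2 * n) ht0,
      selfconj_core_iff mu t n ht0]
    have hcge : t ≤ mu 0 + t * n := by
      have h3 : t * 1 ≤ t * n := Nat.mul_le_mul_left t hn
      omega
    constructor
    · intro h
      have key : ∀ r < t, nres mu (t * n) t r + nres mu (t * n) t (t - 1 - r) = 2 * n := by
        intro r hr
        have hie : ((mu 0 + t * n) % t + r) % t < t := Nat.mod_lt _ ht0
        have hh := h (((mu 0 + t * n) % t + r) % t) hie
        rw [nres_lam t n ht0 hn mu hmu hlen _ hie] at hh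
        rw [r2_eq t (mu 0 + t * n) ht0 hie hcge] at hh
        rw [r1_surj t (mu 0 + t * n) ht0 hr] at hh
        exact hh
      have hb : ∀ r < t, nres mu (t * n) t r ≤ 2 * n := by
        intro r hr
        have := key r hr
        omega
      exact ⟨hb, (arith_pair n t hn ht0 _ hb).2 key⟩
    · intro ⟨hb, hpair⟩ i hi
      have key := (arith_pair n t hn ht0 _ hb).1 hpair
      rw [nres_lam t n ht0 hn mu hmu hlen i hi]
      rw [r2_eq t (mu 0 + t * n) ht0 hi hcge]
      exact key _ (Nat.mod_lt _ ht0)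
end

section
/- Let t ≥ 2, ω a primitive t-th root of unity, n ≥ tm+1, and Y=(y_1,…,y_m). For a nonnegative integer r, the identity h_r(x_1,…,x_{n−tm}, Y, ωY, …, ω^{t−1}Y) = h_r(x_1,…,x_{n−tm}) holds (as an identity of functions of x_1,…,x_{n−tm},y_1,…,y_m) if and only if 0 ≤ r ≤ t−1. -/
open scoped BigOperators

namespace Stmt16Aux

open PowerSeries

/-- the product `∏ (1 - a X)` over a list of field elements. -/
noncomputable def pl {K : Type} [Field K] (L : List K) : K⟦X⟧ := (L.map fun a => 1 - C a * X).prod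

variable {K : Type} [Field K]

lemma pl_nil : pl ([] : List K) = 1 := by simp [pl]

lemma pl_cons (a : K) (L : List K) : pl (a :: L) = (1 - C a * X) * pl L := by
  simp [pl]

lemma pl_append (L M : List K) : pl (L ++ M) = pl L * pl M := by
  simp [pl]

lemma hh_step (x : K) (xs : List K) :
    (mk fun r => hh r (x :: xs)) * (1 - C x * X) = mk fun r => hh r xs := by
  ext n
  rw [mul_sub, mul_one, map_sub]
  have : (mk fun r => hh r (x :: xs)) * (C x * X)
      = ((mk fun r => hh r (x :: xs)) * C x) * X := by ring
  rw [this]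
  cases n with
  | zero => simp [coeff_zero_mul_X]; rw [hh, hh]
  | succ n =>
      rw [coeff_succ_mul_X, coeff_mul_C]
      simp only [coeff_mk]
      rw [show hh (n+1) (x :: xs) = x * hh n (x :: xs) + hh (n+1) xs from by rw [hh]]
      ring

lemma hh_mul_pl (L : List K) : (mk fun r => hh r L) * pl L = 1 := by
  induction L with
  | nil =>
      have : (mk fun r => hh r ([] : List K)) = 1 := by
        ext n
        cases n with
        | zero => simp; rw [hh]
        | succ n => simp [coeff_one]; rw [hh]
      rw [pl_nil, this, mul_one]
  | cons x xs ih =>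
      rw [pl_cons, ← mul_assoc, hh_step, ih]

open Polynomial in
lemma nthRoots_eq {t : ℕ} (ht : 0 < t) {ω : ℂ} (hω : IsPrimitiveRoot ω t) :
    nthRootsFinset t (1 : ℂ) = (Finset.range t).image (ω ^ ·) := by
  symm
  apply Finset.eq_of_subset_of_card_le
  · intro z hz
    obtain ⟨k, hk, rfl⟩ := Finset.mem_image.mp hz
    rw [mem_nthRootsFinset ht, ← pow_mul, mul_comm, pow_mul, hω.pow_eq_one, one_pow]
  · rw [hω.card_nthRootsFinset, Finset.card_image_of_injOn, Finset.card_range]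
    intro i hi j hj hij
    exact hω.pow_inj (Finset.mem_range.mp hi) (Finset.mem_range.mp hj) hij

open Polynomial in
lemma poly_prod {t : ℕ} (ht : 0 < t) {ω : ℂ} (hω : IsPrimitiveRoot ω t) :
    ∏ k ∈ Finset.range t, (1 - Polynomial.C (ω ^ k) * Polynomial.X) = 1 - (Polynomial.X : ℂ[X]) ^ t := by
  have hω0 : ω ≠ 0 := hω.ne_zero ht.ne'
  have hinv : IsPrimitiveRoot ω⁻¹ t := hω.inv
  have hfact : ∀ k : ℕ, 1 - Polynomial.C (ω ^ k) * Polynomial.X = (-Polynomial.C (ω ^ k)) * (Polynomial.X - Polynomial.C (ω⁻¹ ^ k)) := by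
    intro k
    have : (ω ^ k) * (ω⁻¹ ^ k) = 1 := by
      rw [← mul_pow, mul_inv_cancel₀ hω0, one_pow]
    rw [mul_sub, neg_mul, neg_mul, ← C_mul, this, map_one]
    ring
  have hX : (Polynomial.X : ℂ[X]) ^ t - 1 = ∏ k ∈ Finset.range t, (Polynomial.X - Polynomial.C (ω⁻¹ ^ k)) := by
    rw [X_pow_sub_one_eq_prod ht hinv, nthRoots_eq ht hinv, Finset.prod_image]
    intro i hi j hj hij
    exact hinv.pow_inj (Finset.mem_range.mp hi) (Finset.mem_range.mp hj) hij
  have key : ∏ k ∈ Finset.range t, (1 - Polynomial.C (ω ^ k) * Polynomial.X)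
      = (∏ k ∈ Finset.range t, (-Polynomial.C (ω ^ k))) * ((Polynomial.X : ℂ[X]) ^ t - 1) := by
    rw [hX, ← Finset.prod_mul_distrib]
    exact Finset.prod_congr rfl fun k _ => hfact k
  have heval := congrArg (Polynomial.eval 0) key
  simp only [eval_prod, eval_sub, eval_one, eval_mul, eval_C, eval_X, eval_pow,
    eval_neg, mul_zero, sub_zero, zero_pow ht.ne', zero_sub, mul_neg, mul_one,
    Finset.prod_const_one] at heval
  rw [key, show (∏ k ∈ Finset.range t, (-Polynomial.C (ω ^ k))) = Polynomial.C (∏ k ∈ Finset.range t, (-(ω ^ k))) by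
    rw [map_prod]; exact Finset.prod_congr rfl fun k _ => by rw [map_neg]]
  have : (∏ k ∈ Finset.range t, (-(ω ^ k))) = -1 := by
    rw [eq_comm, neg_eq_iff_eq_neg] at heval
    exact heval
  rw [this]
  simp only [map_neg, map_one]
  ring

open Polynomial in
lemma poly_prod_y {t : ℕ} (ht : 0 < t) {ω : ℂ} (hω : IsPrimitiveRoot ω t) (y : ℂ) :
    ∏ k ∈ Finset.range t, (1 - Polynomial.C (ω ^ k * y) * Polynomial.X) = 1 - Polynomial.C (y ^ t) * (Polynomial.X : ℂ[X]) ^ t := by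
  have h := congrArg (eval₂RingHom Polynomial.C (Polynomial.C y * Polynomial.X : ℂ[X])) (poly_prod ht hω)
  simp only [map_prod, map_sub, map_one, map_mul, map_pow, coe_eval₂RingHom,
    Polynomial.eval₂_X, Polynomial.eval₂_C] at h
  rw [show ∏ k ∈ Finset.range t, (1 - Polynomial.C (ω ^ k * y) * Polynomial.X)
      = ∏ k ∈ Finset.range t, (1 - Polynomial.C ω ^ k * (Polynomial.C y * Polynomial.X)) from
    Finset.prod_congr rfl fun k _ => by rw [C_mul, C_pow, mul_assoc], h, mul_pow, ← C_pow]

lemma ps_prod_y {t : ℕ} (ht : 0 < t) {ω : ℂ} (hω : IsPrimitiveRoot ω t) (y : ℂ) :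
    ∏ k ∈ Finset.range t, ((1 : ℂ⟦X⟧) - C (ω ^ k * y) * X)
      = 1 - C (y ^ t) * X ^ t := by
  have h := congrArg (Polynomial.coeToPowerSeries.ringHom (R := ℂ)) (poly_prod_y ht hω y)
  simpa only [map_prod, map_sub, map_one, map_mul, map_pow,
    Polynomial.coeToPowerSeries.ringHom_apply, Polynomial.coe_C, Polynomial.coe_X] using h

lemma list_range_prod {M : Type} [CommMonoid M] (g : ℕ → M) (n : ℕ) :
    ((List.range n).map g).prod = ∏ k ∈ Finset.range n, g k := by
  induction n with
  | zero => simp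
  | succ n ih =>
      rw [List.range_succ, List.map_append, List.prod_append, Finset.prod_range_succ, ih]
      simp

lemma swap_prod {M : Type} [CommMonoid M] (g : ℕ → ℂ → M) (L1 : List ℕ) (L2 : List ℂ) :
    (L1.map fun k => (L2.map fun y => g k y).prod).prod
      = (L2.map fun y => (L1.map fun k => g k y).prod).prod := by
  induction L2 with
  | nil => simp
  | cons y ys ih =>
      simp only [List.map_cons, List.prod_cons]
      rw [← ih, ← List.prod_map_mul]

lemma prod_flatMap {M : Type} [Monoid M] (l : List ℕ) (f : ℕ → List M) :
    (l.flatMap f).prod = (l.map fun a => (f a).prod).prod := by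
  induction l with
  | nil => simp
  | cons a l ih => rw [List.flatMap_cons, List.prod_append, List.map_cons, List.prod_cons, ih]

lemma pl_twist {t : ℕ} (ht : 0 < t) {ω : ℂ} (hω : IsPrimitiveRoot ω t) (Y : List ℂ) :
    pl (twistList t ω Y) = (Y.map fun y => (1 : ℂ⟦X⟧) - C (y ^ t) * X ^ t).prod := by
  unfold pl twistList
  rw [List.map_flatMap, prod_flatMap]
  have h1 : ∀ k : ℕ, ((Y.map fun x => ω ^ k * x).map fun a => (1 : ℂ⟦X⟧) - C a * X).prod
      = (Y.map fun y => (1 : ℂ⟦X⟧) - C (ω ^ k * y) * X).prod := by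
    intro k; rw [List.map_map]; rfl
  calc ((List.range t).map fun k =>
        ((Y.map fun x => ω ^ k * x).map fun a => (1 : ℂ⟦X⟧) - C a * X).prod).prod
      = ((List.range t).map fun k =>
        (Y.map fun y => (1 : ℂ⟦X⟧) - C (ω ^ k * y) * X).prod).prod := by
        rw [List.map_congr_left fun k _ => h1 k]
    _ = (Y.map fun y =>
        ((List.range t).map fun k => (1 : ℂ⟦X⟧) - C (ω ^ k * y) * X).prod).prod :=
        swap_prod _ _ _
    _ = (Y.map fun y => (1 : ℂ⟦X⟧) - C (y ^ t) * X ^ t).prod := by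
        rw [List.map_congr_left]
        intro y _
        rw [list_range_prod, ps_prod_y ht hω]

lemma exists_R (t : ℕ) (Y : List ℂ) :
    ∃ R : ℂ⟦X⟧, (Y.map fun y => (1 : ℂ⟦X⟧) - C (y ^ t) * X ^ t).prod = 1 - X ^ t * R := by
  induction Y with
  | nil => exact ⟨0, by simp⟩
  | cons y ys ih =>
      obtain ⟨R, hR⟩ := ih
      refine ⟨C (y ^ t) + R - C (y ^ t) * X ^ t * R, ?_⟩
      rw [List.map_cons, List.prod_cons, hR]
      ring

lemma one_mul_one_sub_X : (mk fun _ => (1 : ℂ)) * (1 - X) = 1 := by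
  ext n
  rw [mul_sub, mul_one, map_sub]
  cases n with
  | zero => simp
  | succ n => rw [coeff_succ_mul_X]; simp [coeff_one]

lemma g_mul_one_sub_X (t : ℕ) :
    (mk fun r => ((r / t + 1 : ℕ) : ℂ)) * (1 - X)
      = mk fun r => if t ∣ r then (1 : ℂ) else 0 := by
  ext n
  rw [mul_sub, mul_one, map_sub]
  cases n with
  | zero => simp [Nat.dvd_zero]
  | succ n =>
      rw [coeff_succ_mul_X]
      simp only [coeff_mk]
      rw [Nat.succ_div]
      split_ifs with h
      · push_cast; ring
      · push_cast; ring

lemma d_mul (t : ℕ) (ht : 0 < t) :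
    (mk fun r => if t ∣ r then (1 : ℂ) else 0) * (1 - X ^ t) = 1 := by
  ext n
  rw [mul_sub, mul_one, map_sub, coeff_mul_X_pow']
  simp only [coeff_mk, coeff_one]
  by_cases h1 : t ≤ n
  · have hiff : t ∣ n ↔ t ∣ n - t := by
      constructor
      · intro h; exact Nat.dvd_sub h (dvd_refl t)
      · intro h
        have := Nat.dvd_add h (dvd_refl t)
        rwa [Nat.sub_add_cancel h1] at this
    have hn0 : n ≠ 0 := by omega
    rw [if_pos h1, if_neg hn0]
    by_cases h2 : t ∣ n
    · rw [if_pos h2, if_pos (hiff.mp h2)]; ring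
    · rw [if_neg h2, if_neg (fun hh => h2 (hiff.mpr hh))]; ring
  · rw [if_neg h1]
    by_cases h0 : n = 0
    · subst h0; simp
    · rw [if_neg h0, if_neg (fun hd => h0 (Nat.eq_zero_of_dvd_of_lt hd (by omega))), sub_zero]
  
lemma inv_unique {R : Type} [CommRing R] {a b u : R} (h1 : a * u = 1) (h2 : b * u = 1) :
    a = b := by
  calc a = a * (b * u) := by rw [h2, mul_one]
    _ = b * (a * u) := by ring
    _ = b := by rw [h1, mul_one]

end Stmt16Aux

/-- `h_r(x_1, …, x_{n-tm}, Y, ωY, …, ω^{t-1}Y) = h_r(x_1, …, x_{n-tm})`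
holds iff `0 ≤ r ≤ t-1`. -/
theorem stmt16 (t m n : ℕ) (ht : 2 ≤ t) (hm : 1 ≤ m) (hn : t * m + 1 ≤ n)
    (ω : ℂ) (hω : IsPrimitiveRoot ω t) (r : ℕ) :
    (∀ x Y : List ℂ, x.length = n - t * m → Y.length = m →
        hh r (x ++ twistList t ω Y) = hh r x) ↔ r ≤ t - 1 := by
  classical
  have ht0 : 0 < t := by omega
  open PowerSeries Stmt16Aux in
  constructor
  · -- forward
    intro hid
    set p := n - t * m - 1 with hp
    set x0 : List ℂ := 1 :: List.replicate p 0 with hx0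
    set Y0 : List ℂ := 1 :: List.replicate (m - 1) 0 with hY0
    have hlx : x0.length = n - t * m := by
      simp only [hx0, List.length_cons, List.length_replicate]; omega
    have hlY : Y0.length = m := by
      simp only [hY0, List.length_cons, List.length_replicate]; omega
    have key := hid x0 Y0 hlx hlY
    -- compute pl x0
    have hplx : pl x0 = 1 - X := by
      simp [pl, hx0, List.map_replicate, List.prod_replicate]
    -- compute pl (twistList t ω Y0)
    have hpltw : pl (twistList t ω Y0) = 1 - X ^ t := by
      rw [pl_twist ht0 hω]
      simp [hY0, List.map_replicate, List.prod_replicate, zero_pow ht0.ne']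
    -- identify (mk fun r => hh r x0)
    have hx0id : (mk fun r => hh r x0) = mk fun _ => (1 : ℂ) := by
      apply inv_unique (u := 1 - X)
      · have := hh_mul_pl x0; rwa [hplx] at this
      · exact one_mul_one_sub_X
    have h1 : hh r x0 = 1 := by
      have := congrArg (coeff r) hx0id
      simpa using this
    -- identify (mk fun r => hh r (x0 ++ twist))
    have hbig : (mk fun r => hh r (x0 ++ twistList t ω Y0))
        = mk fun r => ((r / t + 1 : ℕ) : ℂ) := by
      apply inv_unique (u := (1 - X) * (1 - X ^ t))
      · have := hh_mul_pl (x0 ++ twistList t ω Y0)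
        rwa [pl_append, hplx, hpltw] at this
      · rw [← mul_assoc, g_mul_one_sub_X, d_mul t ht0]
    have h2 : hh r (x0 ++ twistList t ω Y0) = ((r / t + 1 : ℕ) : ℂ) := by
      have := congrArg (coeff r) hbig
      simpa using this
    rw [key, h1] at h2
    have : (r / t + 1 : ℕ) = 1 := by
      have := h2.symm
      exact_mod_cast this
    have hrt : r / t = 0 := by omega
    have : r < t := (Nat.div_eq_zero_iff.mp hrt).resolve_left (by omega)
    omega
  · -- reverse
    intro hr x Y _ _
    have hrt : r < t := by omega
    obtain ⟨R, hR⟩ := exists_R t Y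
    have hpltw : pl (twistList t ω Y) = 1 - X ^ t * R := by
      rw [pl_twist ht0 hω, hR]
    have hbig := hh_mul_pl (x ++ twistList t ω Y)
    rw [pl_append, hpltw] at hbig
    have hx := hh_mul_pl x
    have hkey : (mk fun s => hh s x)
        = (mk fun s => hh s (x ++ twistList t ω Y)) * (1 - X ^ t * R) := by
      calc (mk fun s => hh s x)
          = (mk fun s => hh s x) * ((mk fun s => hh s (x ++ twistList t ω Y))
              * (pl x * (1 - X ^ t * R))) := by rw [hbig, mul_one]
        _ = (mk fun s => hh s (x ++ twistList t ω Y)) * (1 - X ^ t * R)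
              * ((mk fun s => hh s x) * pl x) := by ring
        _ = (mk fun s => hh s (x ++ twistList t ω Y)) * (1 - X ^ t * R) := by
              rw [hx, mul_one]
    have := congrArg (coeff r) hkey
    simp only [coeff_mk, mul_sub, mul_one, map_sub] at this
    rw [show (mk fun s => hh s (x ++ twistList t ω Y)) * (X ^ t * R)
        = ((mk fun s => hh s (x ++ twistList t ω Y)) * R) * X ^ t from by ring,
      coeff_mul_X_pow', if_neg (by omega : ¬ t ≤ r)] at this
    simp only [coeff_mk, sub_zero] at this
    exact this.symm
end

section
/- Let X=(x_1,…,x_n) and Y=(y_1,…,y_m). Then s_{(n+m, n+m−1, …, 1)}(X,Y) = s_{(n,n−1,…,1)}(X) · s_{(m,m−1,…,1)}(Y) · ∏_{i=1}^n ∏_{j=1}^m (x_i + y_j), and s_{(n+m−1, n+m−2, …, 1)}(X,Y) = s_{(n−1,n−2,…,1)}(X) · s_{(m−1,m−2,…,1)}(Y) · ∏_{i=1}^n ∏_{j=1}^m (x_i + y_j). -/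
open scoped BigOperators

namespace Stmt17Aux

section CR
variable {R : Type*} [CommRing R] {S : Type*} [CommRing S]

def hh' : ℕ → List R → R
  | 0, _ => 1
  | _ + 1, [] => 0
  | m + 1, x :: xs => x * hh' m (x :: xs) + hh' (m + 1) xs
  termination_by m X => (m, X.length)

@[simp] theorem hh'_zero (L : List R) : hh' 0 L = 1 := by simp [hh']
@[simp] theorem hh'_nil (m : ℕ) : hh' (m+1) ([] : List R) = 0 := by simp [hh']
theorem hh'_cons (m : ℕ) (x : R) (xs : List R) :
    hh' (m+1) (x :: xs) = x * hh' m (x :: xs) + hh' (m+1) xs := by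
  rw [hh']

theorem map_hh' (f : R →+* S) : ∀ (m : ℕ) (L : List R), f (hh' m L) = hh' m (L.map f)
  | 0, _ => by simp
  | m + 1, [] => by simp
  | m + 1, x :: xs => by
    rw [hh'_cons, List.map_cons, hh'_cons, map_add, map_mul,
      map_hh' f m (x :: xs), map_hh' f (m+1) xs, List.map_cons]
  termination_by m L => (m, L.length)

theorem hh'_sub (u v : R) (L : List R) :
    ∀ k : ℕ, hh' (k+1) (u::L) - hh' (k+1) (v::L) = (u - v) * hh' k (u::v::L)
  | 0 => by simp [hh'_cons]
  | k + 1 => by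
    have ih := hh'_sub u v L k
    rw [hh'_cons (k+1) u L, hh'_cons (k+1) v L, hh'_cons k u (v::L)]
    linear_combination u * ih

theorem hh'_swap (x y : R) (L : List R) : ∀ m : ℕ, hh' m (x::y::L) = hh' m (y::x::L)
  | 0 => by simp
  | m + 1 => by
    have ih := hh'_swap x y L m
    have hd := hh'_sub y x L m
    rw [hh'_cons m x (y::L), hh'_cons m y (x::L)]
    linear_combination ih * x + hd

theorem hh'_perm {L1 L2 : List R} (p : L1.Perm L2) : ∀ m : ℕ, hh' m L1 = hh' m L2 := by
  induction p with
  | nil => intro m; rfl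
  | cons x p ih =>
    intro m
    induction m with
    | zero => simp
    | succ k ihm => rw [hh'_cons, hh'_cons, ihm, ih (k+1)]
  | swap x y l => intro m; exact hh'_swap y x l m
  | trans p q ih1 ih2 => intro m; rw [ih1 m, ih2 m]

def hz' (m : ℤ) (L : List R) : R := if 0 ≤ m then hh' m.toNat L else 0

theorem map_hz' (f : R →+* S) (m : ℤ) (L : List R) : f (hz' m L) = hz' m (L.map f) := by
  unfold hz'; split <;> simp [map_hh']

theorem hz'_perm {L1 L2 : List R} (p : L1.Perm L2) (m : ℤ) : hz' m L1 = hz' m L2 := by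
  unfold hz'; split <;> simp [hh'_perm p]

def schur' (lam : ℕ → ℕ) (N : ℕ) (L : List R) : R :=
  Matrix.det (Matrix.of fun i j : Fin N => hz' ((lam i : ℤ) - i + j) L)

theorem map_schur' (f : R →+* S) (lam : ℕ → ℕ) (N : ℕ) (L : List R) :
    f (schur' lam N L) = schur' lam N (L.map f) := by
  unfold schur'
  rw [RingHom.map_det]
  congr 1
  ext i j
  simp [Matrix.map, map_hz']

end CR

end Stmt17Aux


namespace Stmt17Aux
section Lagrange
variable {K : Type*} [Field K]
open Finset

theorem hh'_single (x : K) : ∀ k : ℕ, hh' k [x] = x ^ k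
  | 0 => by simp
  | k+1 => by rw [hh'_cons, hh'_single x k, hh'_nil, pow_succ]; ring

theorem hz'_sub_cons (u v : K) (T : List K) (α : ℤ) :
    hz' α (u::T) - hz' α (v::T) = (u - v) * hz' (α - 1) (u::v::T) := by
  rcases lt_trichotomy α 0 with h | h | h
  · rw [hz', hz', hz', if_neg (by omega), if_neg (by omega), if_neg (by omega)]
    ring
  · subst h; simp [hz']
  · have h2 : α.toNat = (α - 1).toNat + 1 := by omega
    rw [hz', hz', hz', if_pos (by omega), if_pos (by omega), if_pos (by omega), h2]
    exact hh'_sub u v T (α - 1).toNat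

theorem lagrange_sum : ∀ (N : ℕ) (z : Fin N → K), Function.Injective z → ∀ k : ℕ,
    ∑ l, z l ^ k * (∏ j ∈ Finset.univ.erase l, (z l - z j))⁻¹
      = hz' ((k : ℤ) + 1 - N) (List.ofFn z)
  | 0, z, _, k => by
    simp [hz', show ((k:ℤ) + 1 - 0).toNat = k + 1 by omega]
  | 1, z, _, k => by
    have h1 : ((k:ℤ) + 1 - ((1:ℕ):ℤ)) = (k:ℤ) := by push_cast; ring
    rw [h1]
    simp [hz', List.ofFn_succ, hh'_single, Int.toNat_natCast]
  | (n+2), z, hinj, k => by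
    have hsinj : Function.Injective (z ∘ Fin.succ) := hinj.comp (Fin.succ_injective _)
    have hcinj : Function.Injective (z ∘ Fin.castSucc) := hinj.comp (Fin.castSucc_injective _)
    have ihs := lagrange_sum (n+1) (z ∘ Fin.succ) hsinj k
    have ihc := lagrange_sum (n+1) (z ∘ Fin.castSucc) hcinj k
    set lst : Fin (n+2) := Fin.last (n+1) with hlst
    have h0lst : (0 : Fin (n+2)) ≠ lst := by
      rw [hlst]; intro h; have := congrArg Fin.val h; simp at this
    have hne : z lst - z 0 ≠ 0 := sub_ne_zero.mpr (fun h => h0lst.symm (hinj h))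
    have hzne : ∀ a b : Fin (n+2), a ≠ b → z a - z b ≠ 0 := fun a b hab =>
      sub_ne_zero.mpr (fun h => hab (hinj h))
    set F : Fin (n+2) → K :=
      fun l => z l ^ k * (∏ j ∈ (univ.erase l).erase 0, (z l - z j))⁻¹ with hF
    set G : Fin (n+2) → K :=
      fun l => z l ^ k * (∏ j ∈ (univ.erase l).erase lst, (z l - z j))⁻¹ with hG
    have hset1 : ∀ l : Fin (n+1),
        ((univ.erase (Fin.succ l)).erase 0 : Finset (Fin (n+2)))
          = (univ.erase l).map ⟨Fin.succ, Fin.succ_injective _⟩ := by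
      intro l
      ext x
      induction x using Fin.cases with
      | zero => simp
      | succ y => simp [Fin.succ_ne_zero, (Fin.succ_injective _).eq_iff]
    have hset2 : ∀ l : Fin (n+1),
        ((univ.erase (Fin.castSucc l)).erase lst : Finset (Fin (n+2)))
          = (univ.erase l).map ⟨Fin.castSucc, Fin.castSucc_injective _⟩ := by
      intro l
      ext x
      induction x using Fin.lastCases with
      | last =>
        simp [hlst]
      | cast y => simp [hlst, (Fin.castSucc_lt_last y).ne, (Fin.castSucc_injective _).eq_iff]
    have hu : ∑ l : Fin (n+1), ((z ∘ Fin.succ) l ^ k *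
          (∏ j ∈ univ.erase l, ((z ∘ Fin.succ) l - (z ∘ Fin.succ) j))⁻¹)
        = (∑ l : Fin (n+2), F l) - F 0 := by
      rw [Fin.sum_univ_succ (f := F)]
      have hterm : ∀ l : Fin (n+1),
          (z ∘ Fin.succ) l ^ k * (∏ j ∈ univ.erase l, ((z ∘ Fin.succ) l - (z ∘ Fin.succ) j))⁻¹
            = F (Fin.succ l) := by
        intro l
        rw [hF]
        simp only [Function.comp_apply]
        rw [hset1 l, Finset.prod_map]
        rfl
      rw [Finset.sum_congr rfl (fun l _ => hterm l)]
      ring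
    have hv : ∑ l : Fin (n+1), ((z ∘ Fin.castSucc) l ^ k *
          (∏ j ∈ univ.erase l, ((z ∘ Fin.castSucc) l - (z ∘ Fin.castSucc) j))⁻¹)
        = (∑ l : Fin (n+2), G l) - G lst := by
      rw [Fin.sum_univ_castSucc (f := G)]
      have hterm : ∀ l : Fin (n+1),
          (z ∘ Fin.castSucc) l ^ k *
              (∏ j ∈ univ.erase l, ((z ∘ Fin.castSucc) l - (z ∘ Fin.castSucc) j))⁻¹
            = G (Fin.castSucc l) := by
        intro l
        rw [hG]
        simp only [Function.comp_apply]
        rw [hset2 l, Finset.prod_map]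
        rfl
      rw [Finset.sum_congr rfl (fun l _ => hterm l)]
      ring
    have key : ∀ l : Fin (n+2),
        (z lst - z 0) * (z l ^ k * (∏ j ∈ univ.erase l, (z l - z j))⁻¹) - F l + G l
          = (if l = 0 then -F 0 else 0) + (if l = lst then G lst else 0) := by
      intro l
      rcases eq_or_ne l 0 with rfl | hl0
      · rw [if_pos rfl, if_neg h0lst]
        have hmem : lst ∈ (univ.erase (0 : Fin (n+2))) := by
          simp [Finset.mem_erase, h0lst.symm, Ne.symm h0lst]
        have hsplit : ∏ j ∈ univ.erase (0 : Fin (n+2)), (z 0 - z j)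
            = (z 0 - z lst) * ∏ j ∈ (univ.erase (0 : Fin (n+2))).erase lst, (z 0 - z j) :=
          (Finset.mul_prod_erase _ _ hmem).symm
        have e2 : (∏ j ∈ (univ.erase (0 : Fin (n+2))).erase lst, (z 0 - z j))⁻¹
            = (z 0 - z lst) * (∏ j ∈ univ.erase (0 : Fin (n+2)), (z 0 - z j))⁻¹ := by
          rw [hsplit, mul_inv, ← mul_assoc, mul_inv_cancel₀ (hzne 0 lst h0lst), one_mul]
        rw [hG]
        simp only
        rw [e2, hF]
        simp only
        ring
      · rcases eq_or_ne l lst with rfl | hllst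
        · rw [if_neg hl0, if_pos rfl]
          have hmem : (0 : Fin (n+2)) ∈ (univ.erase lst) := by
            simp [Finset.mem_erase, h0lst]
          have hsplit : ∏ j ∈ univ.erase lst, (z lst - z j)
              = (z lst - z 0) * ∏ j ∈ (univ.erase lst).erase 0, (z lst - z j) :=
            (Finset.mul_prod_erase _ _ hmem).symm
          have e1 : (∏ j ∈ (univ.erase lst).erase 0, (z lst - z j))⁻¹
              = (z lst - z 0) * (∏ j ∈ univ.erase lst, (z lst - z j))⁻¹ := by
            rw [hsplit, mul_inv, ← mul_assoc, mul_inv_cancel₀ hne, one_mul]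
          rw [hF]
          simp only
          rw [e1]
          ring
        · rw [if_neg hl0, if_neg hllst]
          have hmem0 : (0 : Fin (n+2)) ∈ (univ.erase l) := by
            simp [Finset.mem_erase, Ne.symm hl0]
          have hmeml : lst ∈ (univ.erase l) := by
            simp [Finset.mem_erase, hllst, Ne.symm hllst]
          have hsplit0 : ∏ j ∈ univ.erase l, (z l - z j)
              = (z l - z 0) * ∏ j ∈ (univ.erase l).erase 0, (z l - z j) :=
            (Finset.mul_prod_erase _ _ hmem0).symm
          have hsplitl : ∏ j ∈ univ.erase l, (z l - z j)
              = (z l - z lst) * ∏ j ∈ (univ.erase l).erase lst, (z l - z j) :=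
            (Finset.mul_prod_erase _ _ hmeml).symm
          have e1 : (∏ j ∈ (univ.erase l).erase 0, (z l - z j))⁻¹
              = (z l - z 0) * (∏ j ∈ univ.erase l, (z l - z j))⁻¹ := by
            rw [hsplit0, mul_inv, ← mul_assoc, mul_inv_cancel₀ (hzne l 0 hl0), one_mul]
          have e2 : (∏ j ∈ (univ.erase l).erase lst, (z l - z j))⁻¹
              = (z l - z lst) * (∏ j ∈ univ.erase l, (z l - z j))⁻¹ := by
            rw [hsplitl, mul_inv, ← mul_assoc, mul_inv_cancel₀ (hzne l lst hllst), one_mul]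
          rw [hF, hG]
          simp only
          rw [e1, e2]
          ring
    have hsum : (z lst - z 0) * (∑ l, z l ^ k * (∏ j ∈ univ.erase l, (z l - z j))⁻¹)
        - (∑ l, F l) + (∑ l, G l) = - F 0 + G lst := by
      rw [Finset.mul_sum, ← Finset.sum_sub_distrib, ← Finset.sum_add_distrib]
      rw [Finset.sum_congr rfl (fun l _ => key l), Finset.sum_add_distrib]
      rw [Finset.sum_ite_eq' univ (0 : Fin (n+2)) (fun _ => - F 0),
        Finset.sum_ite_eq' univ lst (fun _ => G lst)]
      simp
    -- list permutations
    set T : List K := List.ofFn (fun i : Fin n => z i.succ.castSucc) with hT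
    have p1 : (List.ofFn (z ∘ Fin.succ)).Perm (z lst :: T) := by
      have : List.ofFn (z ∘ Fin.succ) = T ++ [z lst] := by
        rw [List.ofFn_succ' (f := z ∘ Fin.succ)]
        simp only [Function.comp_apply, List.concat_eq_append, hT]
        have hfe : (fun i : Fin n => z (Fin.castSucc i).succ)
            = (fun i : Fin n => z i.succ.castSucc) := by
          funext i
          rw [Fin.succ_castSucc]
        rw [hfe, Fin.succ_last, ← hlst]
      rw [this]
      exact List.perm_append_singleton _ _
    have p2 : List.ofFn (z ∘ Fin.castSucc) = z 0 :: T := by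
      rw [List.ofFn_succ (f := z ∘ Fin.castSucc)]
      simp only [Function.comp_apply, Fin.castSucc_zero, hT]
    have p3 : (List.ofFn z).Perm (z lst :: z 0 :: T) := by
      have h1 : List.ofFn z = z 0 :: List.ofFn (z ∘ Fin.succ) := by
        rw [List.ofFn_succ (f := z)]; rfl
      rw [h1]
      exact ((p1.cons (z 0)).trans (List.Perm.swap (z lst) (z 0) T))
    -- conclude
    have main : (z lst - z 0) * (∑ l, z l ^ k * (∏ j ∈ univ.erase l, (z l - z j))⁻¹)
        = (z lst - z 0) * hz' ((k : ℤ) + 1 - (n+2 : ℕ)) (List.ofFn z) := by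
      have lhs_eq : (z lst - z 0) * (∑ l, z l ^ k * (∏ j ∈ univ.erase l, (z l - z j))⁻¹)
          = ((∑ l, F l) - F 0) - ((∑ l, G l) - G lst) := by
        linear_combination hsum
      rw [lhs_eq, ← hu, ← hv, ihs, ihc]
      rw [hz'_perm p1 _, hz'_perm (List.Perm.of_eq p2) _]
      rw [hz'_sub_cons, hz'_perm p3.symm]
      have : ((k : ℤ) + 1 - (n+1 : ℕ)) - 1 = (k : ℤ) + 1 - (n+2 : ℕ) := by push_cast; ring
      rw [this]
    exact mul_left_cancel₀ hne main
  termination_by N => N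

end Lagrange
end Stmt17Aux


theorem revPerm_succ_decomp (n : ℕ) :
    (Fin.revPerm : Equiv.Perm (Fin (n+1))) =
      finRotate (n+1) * (Fin.revPerm : Equiv.Perm (Fin n)).viaFintypeEmbedding Fin.castSuccEmb := by
  ext i
  refine Fin.lastCases ?_ (fun j => ?_) i
  · have hmem : Fin.last n ∉ Set.range (Fin.castSuccEmb : Fin n ↪ Fin (n+1)) := by
      rintro ⟨x, hx⟩
      exact absurd hx (Fin.castSucc_lt_last x).ne
    simp [Equiv.Perm.mul_apply, Equiv.Perm.viaFintypeEmbedding_apply_notMem_range _ _ hmem,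
      Fin.rev_last]
  · have h1 : (Fin.revPerm : Equiv.Perm (Fin n)).viaFintypeEmbedding Fin.castSuccEmb
        (Fin.castSuccEmb j) = Fin.castSuccEmb (Fin.revPerm j) :=
      Equiv.Perm.viaFintypeEmbedding_apply_image _ _ _
    simp only [Equiv.Perm.mul_apply, Fin.coe_castSuccEmb, Fin.revPerm_apply] at h1 ⊢
    rw [h1, finRotate_succ_apply, Fin.coeSucc_eq_succ, Fin.rev_castSucc]

theorem sign_revPerm : ∀ n : ℕ, Equiv.Perm.sign (Fin.revPerm : Equiv.Perm (Fin n)) = (-1)^(n*(n-1)/2)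
  | 0 => by
    rw [Subsingleton.elim (Fin.revPerm : Equiv.Perm (Fin 0)) 1]
    simp
  | n + 1 => by
    rw [revPerm_succ_decomp, map_mul, sign_finRotate,
      Equiv.Perm.viaFintypeEmbedding_sign, sign_revPerm n, ← pow_add]
    congr 1
    have h2 : 2 ∣ n * (n-1) := (Nat.even_mul_pred_self n).two_dvd
    cases n with
    | zero => rfl
    | succ k => simp [Nat.succ_sub_one]; ring_nf; omega

namespace Stmt17Aux
section Det
variable {K : Type*} [Field K]
open Finset Matrix

theorem sum_card_Ioi (N : ℕ) : ∑ i : Fin N, (Finset.Ioi i).card = N * (N-1) / 2 := by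
  have h1 : ∀ i : Fin N, (Finset.Ioi i).card = N - 1 - (i : ℕ) := fun i => Fin.card_Ioi i
  rw [Finset.sum_congr rfl (fun i _ => h1 i), Fin.sum_univ_eq_sum_range (fun i => N - 1 - i)]
  rw [← Finset.sum_range_reflect]
  have h2 : ∀ j ∈ Finset.range N, N - 1 - (N - 1 - j) = j := by
    intro j hj; rw [Finset.mem_range] at hj; omega
  rw [Finset.sum_congr rfl h2, Finset.sum_range_id]

theorem prodQ (N : ℕ) (z : Fin N → K) :
    ∏ l, ∏ j ∈ Finset.univ.erase l, (z l - z j)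
      = (-1 : K) ^ (N*(N-1)/2) * (∏ i, ∏ j ∈ Finset.Ioi i, (z j - z i)) ^ 2 := by
  have herase : ∀ l : Fin N, (Finset.univ.erase l) = Finset.Iio l ∪ Finset.Ioi l := by
    intro l; ext x
    simp [Finset.mem_erase, Finset.mem_Iio, Finset.mem_Ioi, ← lt_or_lt_iff_ne, ne_comm]
  have hdisj : ∀ l : Fin N, Disjoint (Finset.Iio l) (Finset.Ioi l) := by
    intro l
    exact Finset.disjoint_left.mpr (fun a ha ha' => absurd (Finset.mem_Ioi.mp ha')
      (not_lt.mpr (le_of_lt (Finset.mem_Iio.mp ha))))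
  have step1 : ∏ l, ∏ j ∈ Finset.univ.erase l, (z l - z j)
      = (∏ l, ∏ j ∈ Finset.Iio l, (z l - z j)) * (∏ l, ∏ j ∈ Finset.Ioi l, (z l - z j)) := by
    rw [← Finset.prod_mul_distrib]
    exact Finset.prod_congr rfl fun l _ => by rw [herase l, Finset.prod_union (hdisj l)]
  have step2 : ∏ l, ∏ j ∈ Finset.Iio l, (z l - z j) = ∏ i, ∏ j ∈ Finset.Ioi i, (z j - z i) := by
    exact Finset.prod_comm' (by simp)
  rw [step1, step2, ← Finset.prod_mul_distrib]
  have step3 : ∀ i : Fin N, (∏ j ∈ Finset.Ioi i, (z j - z i)) * (∏ j ∈ Finset.Ioi i, (z i - z j))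
      = ∏ j ∈ Finset.Ioi i, (-1) * (z j - z i)^2 := by
    intro i; rw [← Finset.prod_mul_distrib]; exact Finset.prod_congr rfl fun j _ => by ring
  rw [Finset.prod_congr rfl (fun i _ => step3 i)]
  have step4 : ∀ i : Fin N, ∏ j ∈ Finset.Ioi i, ((-1) * (z j - z i)^2)
      = (-1 : K)^(Finset.Ioi i).card * (∏ j ∈ Finset.Ioi i, (z j - z i))^2 := by
    intro i; rw [Finset.prod_mul_distrib, Finset.prod_const, Finset.prod_pow]
  rw [Finset.prod_congr rfl (fun i _ => step4 i), Finset.prod_mul_distrib,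
    Finset.prod_pow_eq_pow_sum, sum_card_Ioi, ← Finset.prod_pow]

theorem core_det (N δ : ℕ) (z : Fin N → K) (hinj : Function.Injective z) :
    Matrix.det (Matrix.of fun i j : Fin N =>
        hz' (((2*(N-1-(i:ℕ))+δ : ℕ) : ℤ) + 1 - N + j) (List.ofFn z))
      = (∏ l, z l ^ δ) * ∏ i, ∏ j ∈ Finset.Ioi i, (z i + z j) := by
  classical
  set w : Fin N → K := fun l => (∏ j ∈ Finset.univ.erase l, (z l - z j))⁻¹ with hw
  set b : Fin N → ℕ := fun i => 2*(N-1-(i:ℕ))+δ with hb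
  -- factor M = P * V
  have hM : (Matrix.of fun i j : Fin N => hz' ((b i : ℤ) + 1 - N + j) (List.ofFn z))
      = (Matrix.of fun i l : Fin N => w l * z l ^ (b i)) * Matrix.vandermonde z := by
    ext i j
    rw [Matrix.mul_apply]
    have harg : ((b i + (j:ℕ) : ℕ) : ℤ) + 1 - N = (b i : ℤ) + 1 - N + (j:ℕ) := by push_cast; ring
    have hl := lagrange_sum N z hinj (b i + (j:ℕ))
    rw [harg] at hl
    rw [Matrix.of_apply, ← hl]
    exact Finset.sum_congr rfl fun l _ => by
      rw [Matrix.of_apply, Matrix.vandermonde_apply, pow_add]; ring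
  rw [hM, Matrix.det_mul]
  -- det P
  have hP : Matrix.det (Matrix.of fun i l : Fin N => w l * z l ^ (b i))
      = (∏ l, w l) * Matrix.det (Matrix.of fun i l : Fin N => z l ^ (b i)) :=
    Matrix.det_mul_row w _
  -- split off z^δ
  have hA : Matrix.det (Matrix.of fun i l : Fin N => z l ^ (b i))
      = (∏ l, z l ^ δ) * Matrix.det (Matrix.of fun i l : Fin N => (z l ^ 2) ^ (N-1-(i:ℕ))) := by
    have : (Matrix.of fun i l : Fin N => z l ^ (b i))
        = Matrix.of fun i l : Fin N => z l ^ δ * (z l ^ 2) ^ (N-1-(i:ℕ)) := by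
      ext i l
      rw [Matrix.of_apply, Matrix.of_apply, hb, ← pow_mul, ← pow_add]
      ring_nf
    rw [this]
    exact Matrix.det_mul_row (fun l => z l ^ δ) _
  -- reversed Vandermonde
  have hC : Matrix.det (Matrix.of fun i l : Fin N => (z l ^ 2) ^ (N-1-(i:ℕ)))
      = (-1 : K)^(N*(N-1)/2) *
        Matrix.det (Matrix.vandermonde (fun l => z l ^ 2)) := by
    have hrev : (Matrix.of fun i l : Fin N => (z l ^ 2) ^ (N-1-(i:ℕ)))
        = ((Matrix.vandermonde (fun l => z l ^ 2))ᵀ).submatrix (Fin.revPerm : Equiv.Perm (Fin N)) id := by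
      ext i l
      simp only [Matrix.of_apply, Matrix.submatrix_apply, Matrix.transpose_apply,
        Matrix.vandermonde_apply, Fin.revPerm_apply, id_eq]
      congr 1
      rw [Fin.val_rev]
      omega
    rw [hrev, Matrix.det_permute, Matrix.det_transpose, sign_revPerm N]
    push_cast
    ring
  rw [hP, hA, hC, Matrix.det_vandermonde, Matrix.det_vandermonde]
  -- products
  have hVd2 : ∏ i : Fin N, ∏ j ∈ Finset.Ioi i, (z j ^ 2 - z i ^ 2)
      = (∏ i, ∏ j ∈ Finset.Ioi i, (z j - z i)) * (∏ i, ∏ j ∈ Finset.Ioi i, (z i + z j)) := by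
    rw [← Finset.prod_mul_distrib]
    refine Finset.prod_congr rfl fun i _ => ?_
    rw [← Finset.prod_mul_distrib]
    exact Finset.prod_congr rfl fun j _ => by ring
  have hVd_ne : (∏ i : Fin N, ∏ j ∈ Finset.Ioi i, (z j - z i)) ≠ 0 := by
    refine Finset.prod_ne_zero_iff.mpr fun i _ => Finset.prod_ne_zero_iff.mpr fun j hj => ?_
    exact sub_ne_zero.mpr fun h => (Finset.mem_Ioi.mp hj).ne (hinj h).symm
  have hprodw : ∏ l, w l = ((-1 : K) ^ (N*(N-1)/2) * (∏ i, ∏ j ∈ Finset.Ioi i, (z j - z i)) ^ 2)⁻¹ := by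
    simp only [hw]
    rw [Finset.prod_inv_distrib, prodQ N z]
  rw [hprodw, hVd2]
  have hm1 : ((-1:K))^(N*(N-1)/2) ≠ 0 := pow_ne_zero _ (by norm_num)
  field_simp
end Det
end Stmt17Aux

namespace Stmt17Aux
section GLsec
variable {K : Type*} [Field K]
open Finset Matrix

theorem schur'_stair_a (N : ℕ) (z : Fin N → K) (hinj : Function.Injective z) :
    schur' (stair N) N (List.ofFn z)
      = (∏ l, z l) * ∏ i, ∏ j ∈ Finset.Ioi i, (z i + z j) := by
  have h := core_det N 1 z hinj
  unfold schur'
  have he : (Matrix.of fun i j : Fin N => hz' ((stair N ↑i : ℤ) - ↑↑i + ↑↑j) (List.ofFn z))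
      = Matrix.of fun i j : Fin N =>
          hz' (((2*(N-1-(i:ℕ))+1 : ℕ) : ℤ) + 1 - ↑N + ↑↑j) (List.ofFn z) := by
    ext i j
    simp only [Matrix.of_apply]
    congr 1
    have hi := i.isLt
    simp only [stair]
    omega
  rw [he, h]
  simp

theorem schur'_stair_b (N : ℕ) (z : Fin N → K) (hinj : Function.Injective z) :
    schur' (stair (N-1)) N (List.ofFn z)
      = ∏ i, ∏ j ∈ Finset.Ioi i, (z i + z j) := by
  have h := core_det N 0 z hinj
  unfold schur'
  have he : (Matrix.of fun i j : Fin N => hz' ((stair (N-1) ↑i : ℤ) - ↑↑i + ↑↑j) (List.ofFn z))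
      = Matrix.of fun i j : Fin N =>
          hz' (((2*(N-1-(i:ℕ))+0 : ℕ) : ℤ) + 1 - ↑N + ↑↑j) (List.ofFn z) := by
    ext i j
    simp only [Matrix.of_apply]
    congr 1
    have hi := i.isLt
    simp only [stair]
    omega
  rw [he, h]
  simp

end GLsec

section Complex
open Finset Polynomial

/-- staircase Schur over ℂ, arbitrary variables -/
theorem schur'_stair_c (N : ℕ) (z : Fin N → ℂ) :
    schur' (stair N) N (List.ofFn z)
        = (∏ l, z l) * ∏ i, ∏ j ∈ Finset.Ioi i, (z i + z j) ∧
      schur' (stair (N-1)) N (List.ofFn z)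
        = ∏ i, ∏ j ∈ Finset.Ioi i, (z i + z j) := by
  set zt : Fin N → Polynomial ℂ :=
    fun l => Polynomial.C (z l) + Polynomial.C ((l : ℕ) : ℂ) * Polynomial.X with hzt
  set φ : Polynomial ℂ →+* RatFunc ℂ := (algebraMap (Polynomial ℂ) (RatFunc ℂ)) with hφ
  have hφinj : Function.Injective φ := RatFunc.algebraMap_injective ℂ
  have hinj : Function.Injective (fun l => φ (zt l)) := by
    intro a b hab
    have h1 : zt a = zt b := hφinj hab
    have h2 := congrArg (fun p => Polynomial.coeff p 1) h1
    simp only [hzt, Polynomial.coeff_add, Polynomial.coeff_C, Polynomial.coeff_C_mul,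
      Polynomial.coeff_X_one, if_neg one_ne_zero, zero_add, mul_one] at h2
    exact Fin.ext (Nat.cast_injective h2)
  have hofn : List.ofFn (fun l => φ (zt l)) = (List.ofFn zt).map φ := by rw [List.map_ofFn]; rfl
  have key : ∀ lam : ℕ → ℕ,
      schur' lam N (List.ofFn (fun l => φ (zt l))) = φ (schur' lam N (List.ofFn zt)) := by
    intro lam
    rw [hofn, map_schur']
  -- evaluation at 0
  set ψ : Polynomial ℂ →+* ℂ := Polynomial.evalRingHom (0 : ℂ) with hψ
  have hψz : ∀ l, ψ (zt l) = z l := by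
    intro l
    simp [hψ, hzt]
  have keyψ : ∀ lam : ℕ → ℕ,
      ψ (schur' lam N (List.ofFn zt)) = schur' lam N (List.ofFn z) := by
    intro lam
    rw [map_schur', List.map_ofFn]
    exact congrArg (schur' lam N) (congrArg List.ofFn (funext fun l => hψz l))
  constructor
  · have ha := schur'_stair_a N (fun l => φ (zt l)) hinj
    rw [key] at ha
    have hb' : (∏ l, φ (zt l)) * (∏ i, ∏ j ∈ Finset.Ioi i, (φ (zt i) + φ (zt j)))
        = φ ((∏ l, zt l) * (∏ i, ∏ j ∈ Finset.Ioi i, (zt i + zt j))) := by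
      simp only [map_mul, map_prod, map_add]
    rw [hb'] at ha
    have hA := congrArg ψ (hφinj ha)
    rw [keyψ] at hA
    simp only [map_mul, map_prod, map_add, hψz] at hA
    exact hA
  · have ha := schur'_stair_b N (fun l => φ (zt l)) hinj
    rw [key] at ha
    have hb' : (∏ i, ∏ j ∈ Finset.Ioi i, (φ (zt i) + φ (zt j)))
        = φ (∏ i, ∏ j ∈ Finset.Ioi i, (zt i + zt j)) := by
      simp only [map_prod, map_add]
    rw [hb'] at ha
    have hA := congrArg ψ (hφinj ha)
    rw [keyψ] at hA
    simp only [map_prod, map_add, hψz] at hA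
    exact hA

end Complex
end Stmt17Aux

namespace Stmt17Aux
section Split
open Finset

theorem pairProd {M : Type*} [CommMonoid M] : ∀ (N : ℕ) (g : ℕ → ℕ → M),
    ∏ i : Fin N, ∏ j ∈ Finset.Ioi i, g (i:ℕ) (j:ℕ)
      = ∏ j ∈ Finset.range N, ∏ i ∈ Finset.range j, g i j
  | 0, g => by simp
  | N+1, g => by
    have hIoi : ∀ i : Fin N, (Finset.Ioi (Fin.castSucc i) : Finset (Fin (N+1)))
        = insert (Fin.last N) ((Finset.Ioi i).map Fin.castSuccEmb) := by
      intro i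
      ext x
      induction x using Fin.lastCases with
      | last => simp [Fin.castSucc_lt_last]
      | cast y =>
        simp only [Finset.mem_Ioi, Finset.mem_insert, Finset.mem_map,
          Fin.castSucc_lt_castSucc_iff, (Fin.castSucc_lt_last y).ne, false_or]
        constructor
        · intro h; exact ⟨y, h, rfl⟩
        · rintro ⟨a, ha, hae⟩
          have hv := congrArg Fin.val hae
          simp at hv
          rwa [← (Fin.ext hv : a = y)]
    have hlastnot : ∀ i : Fin N, Fin.last N ∉ (Finset.Ioi i).map Fin.castSuccEmb := by
      intro i h
      rw [Finset.mem_map] at h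
      obtain ⟨a, -, ha⟩ := h
      exact (Fin.castSucc_lt_last a).ne ha
    have hIoiLast : (Finset.Ioi (Fin.last N) : Finset (Fin (N+1))) = ∅ := by
      ext x
      simp [Finset.mem_Ioi, (Fin.le_last x).not_gt]
    rw [Fin.prod_univ_castSucc
      (f := fun i : Fin (N+1) => ∏ j ∈ Finset.Ioi i, g (i:ℕ) (j:ℕ))]
    rw [hIoiLast]
    have hstep : ∀ i : Fin N,
        (∏ j ∈ Finset.Ioi (Fin.castSucc i), g ((Fin.castSucc i : Fin (N+1)):ℕ) (j:ℕ))
          = (∏ j ∈ Finset.Ioi i, g (i:ℕ) (j:ℕ)) * g (i:ℕ) N := by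
      intro i
      rw [hIoi i, Finset.prod_insert (hlastnot i), Finset.prod_map]
      simp only [Fin.coe_castSuccEmb, Fin.coe_castSucc, Fin.val_last]
      rw [mul_comm]
    rw [Finset.prod_congr rfl (fun i _ => hstep i), Finset.prod_mul_distrib,
      pairProd N g, Finset.prod_range_succ, Finset.prod_empty, mul_one]
    congr 1
    exact Fin.prod_univ_eq_prod_range (fun i => g i N) N

end Split
end Stmt17Aux

namespace Stmt17Aux
section Bridge
variable {K : Type} [Field K]

theorem hh_eq_hh' : ∀ (m : ℕ) (L : List K), hh m L = hh' m L
  | 0, _ => by simp [hh]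
  | m + 1, [] => by simp [hh]
  | m + 1, x :: xs => by
    rw [hh, hh'_cons, hh_eq_hh' m (x :: xs), hh_eq_hh' (m+1) xs]
  termination_by m L => (m, L.length)

theorem hz_eq_hz' (m : ℤ) (L : List K) : hz m L = hz' m L := by
  unfold hz hz'; split <;> simp [hh_eq_hh']

theorem schur_eq_schur' (lam : ℕ → ℕ) (N : ℕ) (L : List K) :
    schur lam N L = schur' lam N L := by
  unfold schur schur'; congr 1; ext i j; simp only [Matrix.of_apply]; rw [hz_eq_hz']

end Bridge
end Stmt17Aux

/-- Staircase Schur polynomial factorizations. -/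
theorem stmt17 (n m : ℕ) (X : Fin n → ℂ) (Y : Fin m → ℂ) :
    schur (stair (n + m)) (n + m) (List.ofFn X ++ List.ofFn Y) =
        schur (stair n) n (List.ofFn X) * schur (stair m) m (List.ofFn Y) *
          ∏ i : Fin n, ∏ j : Fin m, (X i + Y j) ∧
      schur (stair (n + m - 1)) (n + m) (List.ofFn X ++ List.ofFn Y) =
        schur (stair (n - 1)) n (List.ofFn X) * schur (stair (m - 1)) m (List.ofFn Y) *
          ∏ i : Fin n, ∏ j : Fin m, (X i + Y j) := by
  classical
  set vZ : ℕ → ℂ := fun t =>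
    if h : t < n then X ⟨t, h⟩ else if h2 : t - n < m then Y ⟨t - n, h2⟩ else 0 with hvZ
  have hvX : ∀ i : Fin n, vZ (i : ℕ) = X i := by
    intro i
    simp only [hvZ, dif_pos i.isLt, Fin.eta]
  have hvY : ∀ j : Fin m, vZ (n + (j : ℕ)) = Y j := by
    intro j
    have h1 : ¬ (n + (j:ℕ) < n) := by omega
    have h2 : n + (j:ℕ) - n < m := by have := j.isLt; omega
    simp only [hvZ, dif_neg h1, dif_pos h2]
    congr 1
    exact Fin.ext (by simp)
  set Z : Fin (n+m) → ℂ := fun t => vZ (t : ℕ) with hZ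
  have hlist : List.ofFn X ++ List.ofFn Y = List.ofFn Z := by
    rw [List.ofFn_add]
    congr 1
    · exact congrArg List.ofFn (funext fun i => by
        rw [hZ]; simp only [Fin.coe_castAdd]; exact (hvX i).symm)
    · exact congrArg List.ofFn (funext fun j => by
        rw [hZ]; simp only [Fin.coe_natAdd]; exact (hvY j).symm)
  obtain ⟨hZa, hZb⟩ := Stmt17Aux.schur'_stair_c (n+m) Z
  obtain ⟨hXa, hXb⟩ := Stmt17Aux.schur'_stair_c n X
  obtain ⟨hYa, hYb⟩ := Stmt17Aux.schur'_stair_c m Y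
  have hprodZ : (∏ t, Z t) = (∏ i, X i) * (∏ j, Y j) := by
    rw [hZ]
    rw [Fin.prod_univ_eq_prod_range (fun t => vZ t) (n+m), Finset.prod_range_add]
    congr 1
    · rw [← Fin.prod_univ_eq_prod_range (fun t => vZ t) n]
      exact Finset.prod_congr rfl fun i _ => hvX i
    · rw [← Fin.prod_univ_eq_prod_range (fun t => vZ (n + t)) m]
      exact Finset.prod_congr rfl fun j _ => hvY j
  have hP1 : (∏ i : Fin n, ∏ j ∈ Finset.Ioi i, (X i + X j))
      = ∏ j ∈ Finset.range n, ∏ i ∈ Finset.range j, (vZ i + vZ j) := by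
    rw [← Stmt17Aux.pairProd n (fun a b => vZ a + vZ b)]
    exact Finset.prod_congr rfl fun i _ => Finset.prod_congr rfl fun j _ => by
      rw [hvX i, hvX j]
  have hP2 : (∏ i : Fin m, ∏ j ∈ Finset.Ioi i, (Y i + Y j))
      = ∏ j ∈ Finset.range m, ∏ i ∈ Finset.range j, (vZ (n+i) + vZ (n+j)) := by
    rw [← Stmt17Aux.pairProd m (fun a b => vZ (n+a) + vZ (n+b))]
    exact Finset.prod_congr rfl fun i _ => Finset.prod_congr rfl fun j _ => by
      rw [hvY i, hvY j]
  have hP3 : (∏ i : Fin n, ∏ j : Fin m, (X i + Y j))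
      = ∏ j ∈ Finset.range m, ∏ i ∈ Finset.range n, (vZ i + vZ (n+j)) := by
    rw [Finset.prod_comm]
    rw [← Fin.prod_univ_eq_prod_range (fun j => ∏ i ∈ Finset.range n, (vZ i + vZ (n+j))) m]
    refine Finset.prod_congr rfl fun j _ => ?_
    rw [← Fin.prod_univ_eq_prod_range (fun i => vZ i + vZ (n + (j:ℕ))) n]
    exact Finset.prod_congr rfl fun i _ => by rw [hvX i, hvY j]
  have hpair : (∏ i : Fin (n+m), ∏ j ∈ Finset.Ioi i, (Z i + Z j))
      = (∏ i : Fin n, ∏ j ∈ Finset.Ioi i, (X i + X j))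
        * (∏ i : Fin m, ∏ j ∈ Finset.Ioi i, (Y i + Y j))
        * (∏ i : Fin n, ∏ j : Fin m, (X i + Y j)) := by
    have h0 : (∏ i : Fin (n+m), ∏ j ∈ Finset.Ioi i, (Z i + Z j))
        = ∏ j ∈ Finset.range (n+m), ∏ i ∈ Finset.range j, (vZ i + vZ j) :=
      Stmt17Aux.pairProd (n+m) (fun a b => vZ a + vZ b)
    rw [h0, Finset.prod_range_add, hP1, hP2, hP3]
    have hT : ∀ j ∈ Finset.range m, (∏ i ∈ Finset.range (n+j), (vZ i + vZ (n+j)))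
        = (∏ i ∈ Finset.range n, (vZ i + vZ (n+j)))
          * ∏ i ∈ Finset.range j, (vZ (n+i) + vZ (n+j)) := by
      intro j _
      rw [Finset.prod_range_add]
    rw [Finset.prod_congr rfl hT, Finset.prod_mul_distrib]
    ring
  constructor
  · rw [hlist, Stmt17Aux.schur_eq_schur', Stmt17Aux.schur_eq_schur',
      Stmt17Aux.schur_eq_schur', hZa, hXa, hYa, hprodZ, hpair]
    ring
  · rw [hlist, Stmt17Aux.schur_eq_schur', Stmt17Aux.schur_eq_schur',
      Stmt17Aux.schur_eq_schur', hZb, hXb, hYb, hpair]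
end
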